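/- Let μ, λ be weights on ℝ and suppose the commutator [b,H] is bounded from L²(μ) to L²(λ). Then sup over intervals I of (1/μ(I)) ∫_I |b(x) − ⟨b⟩_I|² λ(x) dx ≤ C ‖[b,H] : L²(μ) → L²(λ)‖², where C is an absolute constant. If moreover μ ∈ A₂, then also sup over intervals I of (μ⁻¹(I)/|I|²) ∫_I |b(x) − ⟨b⟩_I|² λ(x) dx ≤ C[μ]_{A₂} ‖[b,H] : L²(μ) → L²(λ)‖². -/

import Mathlib

open MeasureTheory Filter Set
open scoped ENNReal Topology

noncomputable section

/-- A *weight* on ℝ: a locally integrable function that is positive a.e. -/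
def IsWeight (w : ℝ → ℝ) : Prop :=
  LocallyIntegrable w volume ∧ ∀ᵐ x : ℝ ∂volume, 0 < w x

/-- The average `⟨f⟩_I = (1/|I|) ∫_I f` of `f` over the interval `I = (a, c)`. -/
def avgI (f : ℝ → ℝ) (a c : ℝ) : ℝ := (c - a)⁻¹ * ∫ x in Set.Ioo a c, f x

/-- `c` is an upper bound for the `A₂` characteristic
`[w]_{A₂} = sup_I ⟨w⟩_I ⟨w⁻¹⟩_I` of `w` (supremum over all intervals). -/
def IsA2 (w : ℝ → ℝ) (c : ℝ) : Prop :=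
  ∀ a b : ℝ, a < b → avgI w a b * avgI (fun x => (w x)⁻¹) a b ≤ c

/-- `c` is an upper bound for the `A_p` characteristic
`[w]_{A_p} = sup_I ⟨w⟩_I ⟨w^{1-p'}⟩_I^{p-1}` of `w`, where `1 - p' = -1/(p-1)`. -/
def IsAp (w : ℝ → ℝ) (p c : ℝ) : Prop :=
  ∀ a b : ℝ, a < b →
    avgI w a b * (avgI (fun x => (w x) ^ (-(p - 1)⁻¹)) a b) ^ (p - 1) ≤ c

/-- The dyadic interval `[n 2^k, (n+1) 2^k)`. -/
def dyad (k n : ℤ) : Set ℝ := Set.Ico ((n : ℝ) * 2 ^ k) (((n : ℝ) + 1) * 2 ^ k)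

/-- The Haar function `h_I = |I|^{-1/2}(-1_{I₋} + 1_{I₊})` of the dyadic
interval `I = [n 2^k, (n+1) 2^k)`. -/
def haar (k n : ℤ) : ℝ → ℝ := fun x =>
  (Real.sqrt ((2 : ℝ) ^ k))⁻¹ *
    ((dyad (k - 1) (2 * n + 1)).indicator (fun _ => (1 : ℝ)) x -
      (dyad (k - 1) (2 * n)).indicator (fun _ => (1 : ℝ)) x)

/-- The Haar coefficient `f̂(I) = ⟨f, h_I⟩` (inner product in unweighted `L²(ℝ)`). -/
def hatD (f : ℝ → ℝ) (k n : ℤ) : ℝ := ∫ x : ℝ, f x * haar k n x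

/-- The average `⟨f⟩_I` of `f` over the dyadic interval `I = [n 2^k, (n+1) 2^k)`. -/
def avgD (f : ℝ → ℝ) (k n : ℤ) : ℝ := ((2 : ℝ) ^ k)⁻¹ * ∫ x in dyad k n, f x

/-- The function `∑_{I ⊆ K} b̂(I) ⟨σ⁻¹⟩_I h_I` appearing in the Bloom constant,
where `K = [n 2^k, (n+1) 2^k)`. -/
def bloomFn (b σ : ℝ → ℝ) (k n : ℤ) : ℝ → ℝ := fun x =>
  ∑' p : ℤ × ℤ,
    Set.indicator {q : ℤ × ℤ | dyad q.1 q.2 ⊆ dyad k n}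
      (fun q => hatD b q.1 q.2 * avgD (fun y => (σ y)⁻¹) q.1 q.2 * haar q.1 q.2 x) p

/-- The Bloom constant
`𝐁₂[σ,τ] = sup_{K ∈ 𝒟} σ⁻¹(K)^{-1/2} ‖∑_{I ⊆ K} b̂(I) ⟨σ⁻¹⟩_I h_I‖_{L²(τ)}`. -/
def B2 (b σ τ : ℝ → ℝ) : ℝ≥0∞ :=
  ⨆ (k : ℤ) (n : ℤ),
    ((ENNReal.ofReal (∫ x in dyad k n, (σ x)⁻¹))⁻¹ *
        ∫⁻ x : ℝ, ENNReal.ofReal ((bloomFn b σ k n x) ^ 2 * τ x)) ^ ((2 : ℝ)⁻¹)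

/-- The weighted BMO norm
`‖b‖_{BMO_ρ} = sup_I ((1/ρ(I)) ∫_I |b - ⟨b⟩_I|² dx)^{1/2}` over all intervals. -/
def bmoRho (b ρ : ℝ → ℝ) : ℝ≥0∞ :=
  ⨆ (a : ℝ) (c : ℝ) (_ : a < c),
    ((ENNReal.ofReal (∫ x in Set.Ioo a c, ρ x))⁻¹ *
        ∫⁻ x in Set.Ioo a c, ENNReal.ofReal ((b x - avgI b a c) ^ 2)) ^ ((2 : ℝ)⁻¹)

/-- The dyadic weighted BMO norm
`‖b‖_{BMO_ρ} = sup_{I ∈ 𝒟} ((1/ρ(I)) ∫_I |b - ⟨b⟩_I|² dx)^{1/2}`. -/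
def bmoRhoD (b ρ : ℝ → ℝ) : ℝ≥0∞ :=
  ⨆ (k : ℤ) (n : ℤ),
    ((ENNReal.ofReal (∫ x in dyad k n, ρ x))⁻¹ *
        ∫⁻ x in dyad k n, ENNReal.ofReal ((b x - avgD b k n) ^ 2)) ^ ((2 : ℝ)⁻¹)

/-- The Hilbert transform as a principal value:
`Hf(x) = lim_{ε → 0⁺} ∫_{|x-y| > ε} f(y)/(x-y) dy`. -/
def hilbertT (f : ℝ → ℝ) (x : ℝ) : ℝ :=
  limUnder (𝓝[>] (0 : ℝ)) fun ε : ℝ => ∫ y in {y : ℝ | ε < |x - y|}, f y / (x - y)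

/-- The commutator `[b, H] f = b ⬝ Hf - H(bf)`. -/
def commH (b f : ℝ → ℝ) : ℝ → ℝ := fun x =>
  b x * hilbertT f x - hilbertT (fun y => b y * f y) x

/-- Bounded, measurable and compactly supported functions: a dense class of
test functions in the weighted `L^p` spaces. -/
def NiceF (f : ℝ → ℝ) : Prop :=
  Measurable f ∧ HasCompactSupport f ∧ ∃ M : ℝ, ∀ x, |f x| ≤ M

/-- The norm of the commutator `[b,H] : L^p(μ) → L^p(λ)`, computed as a
supremum over the dense class of test functions `NiceF`. -/
def commNormP (b μ lam : ℝ → ℝ) (p : ℝ) : ℝ≥0∞ :=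
  ⨆ (f : ℝ → ℝ) (_ : NiceF f),
    ((∫⁻ x : ℝ, ENNReal.ofReal (|commH b f x| ^ p * lam x)) /
        ∫⁻ x : ℝ, ENNReal.ofReal (|f x| ^ p * μ x)) ^ p⁻¹

/-- The paraproduct `Π_b f = ∑_{I ∈ 𝒟} b̂(I) ⟨f⟩_I h_I`. -/
def paraProd (b f : ℝ → ℝ) : ℝ → ℝ := fun x =>
  ∑' p : ℤ × ℤ, hatD b p.1 p.2 * avgD f p.1 p.2 * haar p.1 p.2 x

/-- The dual paraproduct `Π_b* f = ∑_{I ∈ 𝒟} b̂(I) f̂(I) 1_I / |I|`. -/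
def paraProdStar (b f : ℝ → ℝ) : ℝ → ℝ := fun x =>
  ∑' p : ℤ × ℤ,
    hatD b p.1 p.2 * hatD f p.1 p.2 * ((2 : ℝ) ^ p.1)⁻¹ *
      (dyad p.1 p.2).indicator (fun _ => (1 : ℝ)) x

/-- Petermichl's dyadic shift `Ш`, the linear operator determined by
`Ш h_I = (1/√2)(h_{I₋} - h_{I₊})`, written via the Haar expansion. -/
def shiftD (f : ℝ → ℝ) : ℝ → ℝ := fun x =>
  ∑' p : ℤ × ℤ,
    hatD f p.1 p.2 * ((Real.sqrt 2)⁻¹ *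
      (haar (p.1 - 1) (2 * p.2) x - haar (p.1 - 1) (2 * p.2 + 1) x))

/-- The linear span of the Haar system. -/
def HaarSpan : Submodule ℝ (ℝ → ℝ) :=
  Submodule.span ℝ {g : ℝ → ℝ | ∃ k n : ℤ, g = haar k n}

/-- The `L²(μ) → L²(λ)` operator norm of `T`. -/
def opNorm2 (T : (ℝ → ℝ) → ℝ → ℝ) (μ lam : ℝ → ℝ) : ℝ≥0∞ :=
  ⨆ f : ℝ → ℝ,
    ((∫⁻ x : ℝ, ENNReal.ofReal ((T f x) ^ 2 * lam x)) /
        ∫⁻ x : ℝ, ENNReal.ofReal ((f x) ^ 2 * μ x)) ^ ((2 : ℝ)⁻¹)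

/-- The square function sum `∑_{I ⊆ K} (b̂(I)²/|I|) 1_I(x)`,
where `K = [n 2^k, (n+1) 2^k)`. -/
def sqSum (b : ℝ → ℝ) (k n : ℤ) (x : ℝ) : ℝ≥0∞ :=
  ∑' p : ℤ × ℤ,
    Set.indicator {q : ℤ × ℤ | dyad q.1 q.2 ⊆ dyad k n}
      (fun q => ENNReal.ofReal ((hatD b q.1 q.2) ^ 2 * ((2 : ℝ) ^ q.1)⁻¹) *
        (dyad q.1 q.2).indicator (fun _ => (1 : ℝ≥0∞)) x) p

lemma hilbertT_of_support {q₁ q₂ x : ℝ} (hx : x ∉ Set.Icc q₁ q₂)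
    (g : ℝ → ℝ) (hg : ∀ y, y ∉ Set.Ioo q₁ q₂ → g y = 0) :
    hilbertT g x = ∫ y in Set.Ioo q₁ q₂, g y / (x - y) := by
  have hx' : x < q₁ ∨ q₂ < x := by
    rcases lt_or_ge x q₁ with h | h
    · exact Or.inl h
    · right; by_contra h2; push_neg at h2; exact hx ⟨h, h2⟩
  have hδ : ∃ δ > 0, ∀ y ∈ Set.Ioo q₁ q₂, δ ≤ |x - y| := by
    rcases hx' with h | h
    · exact ⟨q₁ - x, sub_pos.2 h, fun y hy => by
        rw [abs_sub_comm, abs_of_pos (by linarith [hy.1])]; linarith [hy.1]⟩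
    · exact ⟨x - q₂, sub_pos.2 h, fun y hy => by
        rw [abs_of_pos (by linarith [hy.2])]; linarith [hy.2]⟩
  obtain ⟨δ, hδpos, hsep⟩ := hδ
  have key : ∀ ε ∈ Set.Ioo (0:ℝ) δ,
      (∫ y in {y : ℝ | ε < |x - y|}, g y / (x - y)) = ∫ y in Set.Ioo q₁ q₂, g y / (x - y) := by
    intro ε hε
    have hmeas : MeasurableSet {y : ℝ | ε < |x - y|} := by
      have : Continuous fun y : ℝ => |x - y| := (continuous_const.sub continuous_id).abs
      exact measurableSet_lt measurable_const this.measurable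
    have hsupp : (Function.support fun y => g y / (x - y)) ⊆ Set.Ioo q₁ q₂ := by
      intro y hy
      by_contra hyQ
      exact hy (by simp [hg y hyQ])
    have hsupp2 : (Function.support fun y => g y / (x - y)) ⊆ {y : ℝ | ε < |x - y|} := by
      intro y hy
      exact lt_of_lt_of_le hε.2 (hsep y (hsupp hy))
    rw [← MeasureTheory.integral_indicator hmeas, Set.indicator_eq_self.2 hsupp2]
    conv_lhs => rw [← Set.indicator_eq_self.2 hsupp]
    exact MeasureTheory.integral_indicator measurableSet_Ioo
  refine Filter.Tendsto.limUnder_eq ?_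
  refine Filter.Tendsto.congr' ?_ tendsto_const_nhds
  exact eventually_of_mem (Ioo_mem_nhdsGT_of_mem ⟨le_refl 0, hδpos⟩) fun ε hε => (key ε hε).symm

lemma commH_of_support {b : ℝ → ℝ} {q₁ q₂ x : ℝ} (hx : x ∉ Set.Icc q₁ q₂) (ψ : ℝ → ℝ) :
    commH b ((Set.Ioo q₁ q₂).indicator ψ) x =
      b x * (∫ y in Set.Ioo q₁ q₂, ψ y / (x - y))
        - ∫ y in Set.Ioo q₁ q₂, b y * ψ y / (x - y) := by
  have h1 : hilbertT ((Set.Ioo q₁ q₂).indicator ψ) x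
      = ∫ y in Set.Ioo q₁ q₂, ψ y / (x - y) := by
    rw [hilbertT_of_support hx _ (fun y hy => Set.indicator_of_notMem hy ψ)]
    exact setIntegral_congr_fun measurableSet_Ioo fun y hy => by
      rw [Set.indicator_of_mem hy]
  have h2 : hilbertT (fun y => b y * (Set.Ioo q₁ q₂).indicator ψ y) x
      = ∫ y in Set.Ioo q₁ q₂, b y * ψ y / (x - y) := by
    rw [hilbertT_of_support hx _ (fun y hy => by simp [Set.indicator_of_notMem hy])]
    exact setIntegral_congr_fun measurableSet_Ioo fun y hy => by
      rw [Set.indicator_of_mem hy]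
  rw [commH, h1, h2]

lemma integrableOn_inv_sub {q₁ q₂ x : ℝ} (hx : x ∉ Set.Icc q₁ q₂) :
    IntegrableOn (fun y => (x - y)⁻¹) (Set.Ioo q₁ q₂) volume := by
  have hcont : ContinuousOn (fun y => (x - y)⁻¹) (Set.Icc q₁ q₂) := by
    apply ContinuousOn.inv₀ (continuous_const.sub continuous_id).continuousOn
    intro y hy
    exact sub_ne_zero.2 fun h => hx ((show x = y from h) ▸ hy)
  exact (hcont.integrableOn_compact isCompact_Icc).mono_set Set.Ioo_subset_Icc_self

lemma integrableOn_mul_inv_sub {b : ℝ → ℝ} (hb : LocallyIntegrable b volume)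
    {q₁ q₂ x : ℝ} (hx : x ∉ Set.Icc q₁ q₂) (ψ : ℝ → ℝ) (hψ : Continuous ψ) :
    IntegrableOn (fun y => b y * (ψ y * (x - y)⁻¹)) (Set.Ioo q₁ q₂) volume := by
  have hbQ : IntegrableOn b (Set.Ioo q₁ q₂) volume :=
    (hb.integrableOn_isCompact isCompact_Icc).mono_set Set.Ioo_subset_Icc_self
  have hcont : ContinuousOn (fun y => ψ y * (x - y)⁻¹) (Set.Icc q₁ q₂) := by
    apply hψ.continuousOn.mul
    apply ContinuousOn.inv₀ (continuous_const.sub continuous_id).continuousOn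
    intro y hy
    exact sub_ne_zero.2 fun h => hx ((show x = y from h) ▸ hy)
  have := hbQ.mul_continuousOn_of_subset hcont measurableSet_Ioo isCompact_Icc
    Set.Ioo_subset_Icc_self
  exact this

/-- The key identity: the commutator applied to the pair of test functions
recovers the oscillation `b x - ⟨b⟩_Q` exactly. -/
lemma key_identity {b : ℝ → ℝ} (hb : LocallyIntegrable b volume) {q₁ q₂ x : ℝ}
    (hq : q₁ < q₂) (hx : x ∉ Set.Icc q₁ q₂) :
    (q₂ - q₁) * (b x - avgI b q₁ q₂) =
      (x - (q₁ + q₂) / 2) * commH b ((Set.Ioo q₁ q₂).indicator fun _ => (1:ℝ)) x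
        + commH b ((Set.Ioo q₁ q₂).indicator fun y => (q₁ + q₂) / 2 - y) x := by
  set c₀ : ℝ := (q₁ + q₂) / 2 with hc₀
  rw [commH_of_support hx, commH_of_support hx]
  have hne : ∀ y ∈ Set.Ioo q₁ q₂, x - y ≠ 0 := fun y hy =>
    sub_ne_zero.2 fun h => hx (h ▸ Set.Ioo_subset_Icc_self hy)
  have i1 : IntegrableOn (fun y => (x - y)⁻¹) (Set.Ioo q₁ q₂) volume := integrableOn_inv_sub hx
  have i3 : IntegrableOn (fun y => (c₀ - y) * (x - y)⁻¹) (Set.Ioo q₁ q₂) volume := by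
    have hcont : ContinuousOn (fun y => (c₀ - y) * (x - y)⁻¹) (Set.Icc q₁ q₂) := by
      apply (continuous_const.sub continuous_id).continuousOn.mul
      apply ContinuousOn.inv₀ (continuous_const.sub continuous_id).continuousOn
      intro y hy; exact sub_ne_zero.2 fun h => hx ((show x = y from h) ▸ hy)
    exact (hcont.integrableOn_compact isCompact_Icc).mono_set Set.Ioo_subset_Icc_self
  have i2 : IntegrableOn (fun y => b y * ((1:ℝ) * (x - y)⁻¹)) (Set.Ioo q₁ q₂) volume :=
    integrableOn_mul_inv_sub hb hx _ continuous_const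
  have i4 : IntegrableOn (fun y => b y * ((c₀ - y) * (x - y)⁻¹)) (Set.Ioo q₁ q₂) volume :=
    integrableOn_mul_inv_sub hb hx _ (continuous_const.sub continuous_id)
  have hbQ : IntegrableOn b (Set.Ioo q₁ q₂) volume :=
    (hb.integrableOn_isCompact isCompact_Icc).mono_set Set.Ioo_subset_Icc_self
  -- claim 1 : (x - c₀) * ∫ 1/(x-y) + ∫ (c₀-y)/(x-y) = q₂ - q₁
  have claim1 : (x - c₀) * (∫ y in Set.Ioo q₁ q₂, (1:ℝ) / (x - y))
      + (∫ y in Set.Ioo q₁ q₂, (c₀ - y) / (x - y)) = q₂ - q₁ := by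
    have e1 : (∫ y in Set.Ioo q₁ q₂, (1:ℝ) / (x - y)) = ∫ y in Set.Ioo q₁ q₂, (x - y)⁻¹ := by
      refine setIntegral_congr_fun measurableSet_Ioo fun y hy => one_div _
    have e2 : (∫ y in Set.Ioo q₁ q₂, (c₀ - y) / (x - y))
        = ∫ y in Set.Ioo q₁ q₂, (c₀ - y) * (x - y)⁻¹ :=
      setIntegral_congr_fun measurableSet_Ioo fun y hy => div_eq_mul_inv _ _
    rw [e1, e2, ← MeasureTheory.integral_const_mul, ← MeasureTheory.integral_add (i1.const_mul _) i3]
    have : ∀ y ∈ Set.Ioo q₁ q₂, (x - c₀) * (x - y)⁻¹ + (c₀ - y) * (x - y)⁻¹ = 1 := by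
      intro y hy
      field_simp [hne y hy]
      ring
    rw [setIntegral_congr_fun measurableSet_Ioo this]
    simp [Real.volume_Ioo, ENNReal.toReal_ofReal (le_of_lt (sub_pos.2 hq)), le_of_lt hq]
  -- claim 2 : (x - c₀) * ∫ b/(x-y) + ∫ b (c₀-y)/(x-y) = ∫ b
  have claim2 : (x - c₀) * (∫ y in Set.Ioo q₁ q₂, b y * 1 / (x - y))
      + (∫ y in Set.Ioo q₁ q₂, b y * (c₀ - y) / (x - y)) = ∫ y in Set.Ioo q₁ q₂, b y := by
    have e1 : (∫ y in Set.Ioo q₁ q₂, b y * 1 / (x - y))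
        = ∫ y in Set.Ioo q₁ q₂, b y * ((1:ℝ) * (x - y)⁻¹) :=
      setIntegral_congr_fun measurableSet_Ioo fun y hy => by ring
    have e2 : (∫ y in Set.Ioo q₁ q₂, b y * (c₀ - y) / (x - y))
        = ∫ y in Set.Ioo q₁ q₂, b y * ((c₀ - y) * (x - y)⁻¹) :=
      setIntegral_congr_fun measurableSet_Ioo fun y hy => by ring
    rw [e1, e2, ← MeasureTheory.integral_const_mul, ← MeasureTheory.integral_add (i2.const_mul _) i4]
    refine setIntegral_congr_fun measurableSet_Ioo fun y hy => ?_
    have h0 := hne y hy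
    field_simp
    ring
  have hlen : (q₂ - q₁) ≠ 0 := ne_of_gt (sub_pos.2 hq)
  have havg : (q₂ - q₁) * avgI b q₁ q₂ = ∫ y in Set.Ioo q₁ q₂, b y := by
    rw [avgI, ← mul_assoc, mul_inv_cancel₀ hlen, one_mul]
  calc (q₂ - q₁) * (b x - avgI b q₁ q₂)
      = b x * (q₂ - q₁) - (q₂ - q₁) * avgI b q₁ q₂ := by ring
    _ = b x * ((x - c₀) * (∫ y in Set.Ioo q₁ q₂, (1:ℝ) / (x - y))
          + (∫ y in Set.Ioo q₁ q₂, (c₀ - y) / (x - y)))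
        - ((x - c₀) * (∫ y in Set.Ioo q₁ q₂, b y * 1 / (x - y))
          + (∫ y in Set.Ioo q₁ q₂, b y * (c₀ - y) / (x - y))) := by
        rw [claim1, havg, claim2]
    _ = _ := by ring


lemma niceF_indicator {q₁ q₂ : ℝ} (ψ : ℝ → ℝ) (hψ : Measurable ψ) (M : ℝ)
    (hM : ∀ y ∈ Set.Icc q₁ q₂, |ψ y| ≤ M) :
    NiceF ((Set.Ioo q₁ q₂).indicator ψ) := by
  refine ⟨hψ.indicator measurableSet_Ioo, ?_, max M 0, ?_⟩
  · apply HasCompactSupport.intro (isCompact_Icc (a := q₁) (b := q₂))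
    intro y hy
    exact Set.indicator_of_notMem (fun hmem => hy (Set.Ioo_subset_Icc_self hmem)) ψ
  · intro y
    by_cases hy : y ∈ Set.Ioo q₁ q₂
    · rw [Set.indicator_of_mem hy]
      exact le_max_of_le_left (hM y (Set.Ioo_subset_Icc_self hy))
    · rw [Set.indicator_of_notMem hy]
      simp

lemma sq_estimate {h A F G B : ℝ} (e : h * B = A * F + G) (hA : A ^ 2 ≤ (3/2 * h) ^ 2) :
    h ^ 2 * B ^ 2 ≤ 9/2 * h ^ 2 * F ^ 2 + 2 * G ^ 2 := by
  have e2 : (h * B) ^ 2 = (A * F + G) ^ 2 := by rw [e]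
  nlinarith [sq_nonneg (A * F - G), mul_le_mul_of_nonneg_right hA (sq_nonneg F), e2]

lemma stronglyMeasurable_G {q₁ q₂ : ℝ} (g : ℝ → ℝ) (hg : Measurable g) :
    StronglyMeasurable (fun x => ∫ y in Set.Ioo q₁ q₂, g y / (x - y)) := by
  apply MeasureTheory.StronglyMeasurable.integral_prod_right
    (f := fun x y => g y / (x - y))
  apply Measurable.stronglyMeasurable
  exact (hg.comp measurable_snd).div (measurable_fst.sub measurable_snd)

/-- Core estimate: the λ-weighted square oscillation of `b` on `D = Ioo d₁ d₂`
against the Lebesgue average of `b` over a disjoint nearby interval `Q = Ioo q₁ q₂`. -/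
lemma piece_estimate {μ lam b : ℝ → ℝ} {N : ℝ}
    (hμ : LocallyIntegrable μ volume) (hμ0 : ∀ᵐ x : ℝ ∂volume, 0 < μ x)
    (hlam : LocallyIntegrable lam volume) (hlam0 : ∀ᵐ x : ℝ ∂volume, 0 < lam x)
    (hb : LocallyIntegrable b volume)
    (hcomm : ∀ f : ℝ → ℝ, NiceF f →
      (∫⁻ x : ℝ, ENNReal.ofReal ((commH b f x) ^ 2 * lam x)) ≤
        ENNReal.ofReal (N ^ 2) * ∫⁻ x : ℝ, ENNReal.ofReal ((f x) ^ 2 * μ x))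
    {q₁ q₂ d₁ d₂ : ℝ} (hq : q₁ < q₂)
    (hdis : ∀ x ∈ Set.Ioo d₁ d₂, x ∉ Set.Icc q₁ q₂)
    (hfar : ∀ x ∈ Set.Ioo d₁ d₂, (x - (q₁ + q₂) / 2) ^ 2 ≤ (3 / 2 * (q₂ - q₁)) ^ 2) :
    (∫⁻ x in Set.Ioo d₁ d₂, ENNReal.ofReal ((b x - avgI b q₁ q₂) ^ 2 * lam x)) ≤
      ENNReal.ofReal (5 * N ^ 2) * ∫⁻ y in Set.Ioo q₁ q₂, ENNReal.ofReal (μ y) := by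
  set Q : Set ℝ := Set.Ioo q₁ q₂ with hQ
  set D : Set ℝ := Set.Ioo d₁ d₂ with hD
  set h : ℝ := q₂ - q₁ with hh
  set c₀ : ℝ := (q₁ + q₂) / 2 with hc₀
  have hhpos : 0 < h := sub_pos.2 hq
  set b' : ℝ → ℝ := hb.aestronglyMeasurable.mk b with hb'def
  have hb'sm : StronglyMeasurable b' := hb.aestronglyMeasurable.stronglyMeasurable_mk
  have hbb' : b =ᵐ[volume] b' := hb.aestronglyMeasurable.ae_eq_mk
  set f₁ : ℝ → ℝ := Q.indicator (fun _ => (1:ℝ)) with hf₁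
  set f₂ : ℝ → ℝ := Q.indicator (fun y => c₀ - y) with hf₂
  have nice₁ : NiceF f₁ := niceF_indicator _ measurable_const 1 (fun y _ => by simp)
  have nice₂ : NiceF f₂ := by
    refine niceF_indicator _ (measurable_const.sub measurable_id) (|c₀| + |q₁| + |q₂|) ?_
    intro y hy
    rw [abs_sub_comm]
    calc |y - c₀| ≤ |y| + |c₀| := abs_sub _ _
      _ ≤ |c₀| + |q₁| + |q₂| := by
          rcases abs_le.1 (le_refl |y|) with _
          have h1 : q₁ ≤ y := hy.1
          have h2 : y ≤ q₂ := hy.2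
          have : |y| ≤ |q₁| + |q₂| := by
            cases' abs_cases y with hc hc <;> cases' abs_cases q₁ with h1' h1' <;>
              cases' abs_cases q₂ with h2' h2' <;> linarith
          linarith
  set G₁ : ℝ → ℝ := fun x => ∫ y in Q, (1:ℝ) / (x - y) with hG₁
  set G₂ : ℝ → ℝ := fun x => ∫ y in Q, b' y * 1 / (x - y) with hG₂
  set G₃ : ℝ → ℝ := fun x => ∫ y in Q, (c₀ - y) / (x - y) with hG₃
  set G₄ : ℝ → ℝ := fun x => ∫ y in Q, b' y * (c₀ - y) / (x - y) with hG₄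
  set φ₁ : ℝ → ℝ := fun x => b x * G₁ x - G₂ x with hφ₁
  set φ₂ : ℝ → ℝ := fun x => b x * G₃ x - G₄ x with hφ₂
  have hcongr : ∀ (ψ : ℝ → ℝ) (x : ℝ),
      (∫ y in Q, b y * ψ y / (x - y)) = ∫ y in Q, b' y * ψ y / (x - y) := by
    intro ψ x
    refine integral_congr_ae ?_
    filter_upwards [ae_restrict_of_ae hbb'] with y hy
    rw [hy]
  have eq1 : ∀ x ∈ D, commH b f₁ x = φ₁ x := by
    intro x hx
    rw [hf₁, commH_of_support (hdis x hx), hφ₁, hG₁, hG₂, hcongr]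
  have eq2 : ∀ x ∈ D, commH b f₂ x = φ₂ x := by
    intro x hx
    rw [hf₂, commH_of_support (hdis x hx), hφ₂, hG₃, hG₄, hcongr]
  have ident : ∀ x ∈ D, h * (b x - avgI b q₁ q₂) = (x - c₀) * φ₁ x + φ₂ x := by
    intro x hx
    rw [← eq1 x hx, ← eq2 x hx]
    exact key_identity hb hq (hdis x hx)
  -- measurability
  have hG₁m : StronglyMeasurable G₁ :=
    stronglyMeasurable_G (fun _ => (1:ℝ)) measurable_const
  have hG₂m : StronglyMeasurable G₂ :=
    stronglyMeasurable_G (fun y => b' y * 1) (hb'sm.measurable.mul measurable_const)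
  have hG₃m : StronglyMeasurable G₃ :=
    stronglyMeasurable_G (fun y => c₀ - y) (measurable_const.sub measurable_id)
  have hG₄m : StronglyMeasurable G₄ :=
    stronglyMeasurable_G (fun y => b' y * (c₀ - y))
      (hb'sm.measurable.mul (measurable_const.sub measurable_id))
  have hbm : AEMeasurable b volume := hb.aestronglyMeasurable.aemeasurable
  have hlamm : AEMeasurable lam volume := hlam.aestronglyMeasurable.aemeasurable
  have hφ₁m : AEMeasurable φ₁ volume := (hbm.mul hG₁m.measurable.aemeasurable).sub
    hG₂m.measurable.aemeasurable
  have hφ₂m : AEMeasurable φ₂ volume := (hbm.mul hG₃m.measurable.aemeasurable).sub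
    hG₄m.measurable.aemeasurable
  set Φ₁ : ℝ → ℝ≥0∞ := fun x => ENNReal.ofReal (φ₁ x ^ 2 * lam x) with hΦ₁
  set Φ₂ : ℝ → ℝ≥0∞ := fun x => ENNReal.ofReal (φ₂ x ^ 2 * lam x) with hΦ₂
  have hsq₁ : AEMeasurable (fun x => φ₁ x ^ 2 * lam x) volume := by
    have : AEMeasurable (fun x => φ₁ x * φ₁ x * lam x) volume := (hφ₁m.mul hφ₁m).mul hlamm
    exact this.congr (Eventually.of_forall fun x => by ring)
  have hsq₂ : AEMeasurable (fun x => φ₂ x ^ 2 * lam x) volume := by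
    have : AEMeasurable (fun x => φ₂ x * φ₂ x * lam x) volume := (hφ₂m.mul hφ₂m).mul hlamm
    exact this.congr (Eventually.of_forall fun x => by ring)
  have hΦ₁m : AEMeasurable Φ₁ volume := ENNReal.measurable_ofReal.comp_aemeasurable hsq₁
  have hΦ₂m : AEMeasurable Φ₂ volume := ENNReal.measurable_ofReal.comp_aemeasurable hsq₂
  -- pointwise estimate
  have ptwise : ∀ᵐ x ∂(volume.restrict D),
      ENNReal.ofReal ((b x - avgI b q₁ q₂) ^ 2 * lam x) ≤
        ENNReal.ofReal (9/2) * Φ₁ x + ENNReal.ofReal (2/h^2) * Φ₂ x := by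
    filter_upwards [ae_restrict_mem measurableSet_Ioo,
      ae_restrict_of_ae (hlam0.mono fun x hx => le_of_lt hx)] with x hxD hlx
    have e := ident x hxD
    have hfar' := hfar x hxD
    have hh2 : (0:ℝ) < h ^ 2 := by positivity
    have e2 : h ^ 2 * (b x - avgI b q₁ q₂) ^ 2 ≤
        9/2 * h^2 * φ₁ x ^ 2 + 2 * φ₂ x ^ 2 := sq_estimate e hfar'
    have key2 : (b x - avgI b q₁ q₂) ^ 2 ≤ 9/2 * φ₁ x ^ 2 + 2/h^2 * φ₂ x ^ 2 := by
      have hrw : h ^ 2 * (9/2 * φ₁ x ^ 2 + 2/h^2 * φ₂ x ^ 2)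
          = 9/2 * h^2 * φ₁ x ^ 2 + 2 * φ₂ x ^ 2 := by
        field_simp
      have := e2.trans_eq hrw.symm
      exact le_of_mul_le_mul_left this hh2
    have key3 : (b x - avgI b q₁ q₂) ^ 2 * lam x ≤
        9/2 * (φ₁ x ^ 2 * lam x) + 2/h^2 * (φ₂ x ^ 2 * lam x) := by
      have := mul_le_mul_of_nonneg_right key2 hlx
      calc (b x - avgI b q₁ q₂) ^ 2 * lam x
          ≤ (9/2 * φ₁ x ^ 2 + 2/h^2 * φ₂ x ^ 2) * lam x := this
        _ = 9/2 * (φ₁ x ^ 2 * lam x) + 2/h^2 * (φ₂ x ^ 2 * lam x) := by ring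
    calc ENNReal.ofReal ((b x - avgI b q₁ q₂) ^ 2 * lam x)
        ≤ ENNReal.ofReal (9/2 * (φ₁ x ^ 2 * lam x) + 2/h^2 * (φ₂ x ^ 2 * lam x)) :=
          ENNReal.ofReal_le_ofReal key3
      _ = ENNReal.ofReal (9/2 * (φ₁ x ^ 2 * lam x)) +
          ENNReal.ofReal (2/h^2 * (φ₂ x ^ 2 * lam x)) := by
          rw [ENNReal.ofReal_add (by positivity) (by positivity)]
      _ = ENNReal.ofReal (9/2) * Φ₁ x + ENNReal.ofReal (2/h^2) * Φ₂ x := by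
          rw [hΦ₁, hΦ₂, ← ENNReal.ofReal_mul (by norm_num), ← ENNReal.ofReal_mul (by positivity)]
  -- integrate
  have step1 : (∫⁻ x in D, ENNReal.ofReal ((b x - avgI b q₁ q₂) ^ 2 * lam x)) ≤
      ENNReal.ofReal (9/2) * (∫⁻ x in D, Φ₁ x) + ENNReal.ofReal (2/h^2) * ∫⁻ x in D, Φ₂ x := by
    calc (∫⁻ x in D, ENNReal.ofReal ((b x - avgI b q₁ q₂) ^ 2 * lam x))
        ≤ ∫⁻ x in D, (ENNReal.ofReal (9/2) * Φ₁ x + ENNReal.ofReal (2/h^2) * Φ₂ x) :=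
          lintegral_mono_ae ptwise
      _ = (∫⁻ x in D, ENNReal.ofReal (9/2) * Φ₁ x) + ∫⁻ x in D, ENNReal.ofReal (2/h^2) * Φ₂ x :=
          lintegral_add_left' ((hΦ₁m.restrict).const_mul _) _
      _ = ENNReal.ofReal (9/2) * (∫⁻ x in D, Φ₁ x) + ENNReal.ofReal (2/h^2) * ∫⁻ x in D, Φ₂ x := by
          rw [lintegral_const_mul' _ _ ENNReal.ofReal_ne_top,
            lintegral_const_mul' _ _ ENNReal.ofReal_ne_top]
  -- commutator bounds
  have bound₁ : (∫⁻ x in D, Φ₁ x) ≤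
      ENNReal.ofReal (N ^ 2) * ∫⁻ y in Q, ENNReal.ofReal (μ y) := by
    have e : (∫⁻ x in D, Φ₁ x) = ∫⁻ x in D, ENNReal.ofReal ((commH b f₁ x) ^ 2 * lam x) := by
      refine lintegral_congr_ae ?_
      filter_upwards [ae_restrict_mem measurableSet_Ioo] with x hxD
      rw [eq1 x hxD]
    rw [e]
    refine le_trans (setLIntegral_le_lintegral _ _) ?_
    refine le_trans (hcomm f₁ nice₁) ?_
    have : (∫⁻ x : ℝ, ENNReal.ofReal ((f₁ x) ^ 2 * μ x)) = ∫⁻ y in Q, ENNReal.ofReal (μ y) := by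
      have hptw : ∀ x : ℝ, ENNReal.ofReal ((f₁ x) ^ 2 * μ x)
          = Q.indicator (fun y => ENNReal.ofReal (μ y)) x := by
        intro x
        by_cases hx : x ∈ Q
        · simp [hf₁, Set.indicator_of_mem hx]
        · simp [hf₁, Set.indicator_of_notMem hx]
      rw [lintegral_congr hptw, lintegral_indicator measurableSet_Ioo]
    rw [this]
  have bound₂ : (∫⁻ x in D, Φ₂ x) ≤
      ENNReal.ofReal (N ^ 2) * (ENNReal.ofReal (h^2/4) * ∫⁻ y in Q, ENNReal.ofReal (μ y)) := by
    have e : (∫⁻ x in D, Φ₂ x) = ∫⁻ x in D, ENNReal.ofReal ((commH b f₂ x) ^ 2 * lam x) := by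
      refine lintegral_congr_ae ?_
      filter_upwards [ae_restrict_mem measurableSet_Ioo] with x hxD
      rw [eq2 x hxD]
    rw [e]
    refine le_trans (setLIntegral_le_lintegral _ _) ?_
    refine le_trans (hcomm f₂ nice₂) ?_
    refine mul_le_mul_right ?_ _
    have hptw : ∀ᵐ x : ℝ ∂volume, ENNReal.ofReal ((f₂ x) ^ 2 * μ x)
        ≤ ENNReal.ofReal (h^2/4) * Q.indicator (fun y => ENNReal.ofReal (μ y)) x := by
      filter_upwards [hμ0.mono fun x hx => le_of_lt hx] with x hμx
      by_cases hx : x ∈ Q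
      · rw [Set.indicator_of_mem hx, hf₂, Set.indicator_of_mem hx,
          ← ENNReal.ofReal_mul (by positivity)]
        refine ENNReal.ofReal_le_ofReal ?_
        refine mul_le_mul_of_nonneg_right ?_ hμx
        have h1 : q₁ < x := hx.1
        have h2 : x < q₂ := hx.2
        have : (c₀ - x)^2 ≤ (h/2)^2 := by
          apply sq_le_sq'
          · rw [hc₀, hh]; linarith
          · rw [hc₀, hh]; linarith
        calc (c₀ - x)^2 ≤ (h/2)^2 := this
          _ = h^2/4 := by ring
      · rw [Set.indicator_of_notMem hx, hf₂, Set.indicator_of_notMem hx]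
        simp
    calc (∫⁻ x : ℝ, ENNReal.ofReal ((f₂ x) ^ 2 * μ x))
        ≤ ∫⁻ x : ℝ, ENNReal.ofReal (h^2/4) * Q.indicator (fun y => ENNReal.ofReal (μ y)) x :=
          lintegral_mono_ae hptw
      _ = ENNReal.ofReal (h^2/4) * ∫⁻ y in Q, ENNReal.ofReal (μ y) := by
          rw [lintegral_const_mul' _ _ ENNReal.ofReal_ne_top,
            lintegral_indicator measurableSet_Ioo]
  -- combine
  refine step1.trans ?_
  refine le_trans (add_le_add (mul_le_mul_right bound₁ _) (mul_le_mul_right bound₂ _)) ?_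
  set W : ℝ≥0∞ := ∫⁻ y in Q, ENNReal.ofReal (μ y) with hW
  have c1 : ENNReal.ofReal (9/2) * ENNReal.ofReal (N^2) = ENNReal.ofReal (9/2 * N^2) :=
    (ENNReal.ofReal_mul (by norm_num)).symm
  have c2 : ENNReal.ofReal (2/h^2) * (ENNReal.ofReal (N^2) * ENNReal.ofReal (h^2/4))
      = ENNReal.ofReal (2/h^2 * (N^2 * (h^2/4))) := by
    rw [← ENNReal.ofReal_mul (p := N^2) (by positivity),
      ← ENNReal.ofReal_mul (p := 2/h^2) (by positivity)]
  have hcoef : ENNReal.ofReal (9/2) * (ENNReal.ofReal (N ^ 2) * W)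
      + ENNReal.ofReal (2/h^2) * (ENNReal.ofReal (N ^ 2) * (ENNReal.ofReal (h^2/4) * W))
      = (ENNReal.ofReal (9/2 * N^2) + ENNReal.ofReal (2/h^2 * (N^2 * (h^2/4)))) * W := by
    rw [← c1, ← c2]
    ring
  rw [hcoef]
  refine mul_le_mul_left ?_ W
  have h2 : (2:ℝ)/h^2 * (N^2 * (h^2/4)) = N^2/2 := by
    field_simp
    ring
  rw [h2, ← ENNReal.ofReal_add (by positivity) (by positivity)]
  refine ENNReal.ofReal_le_ofReal ?_
  linarith [sq_nonneg N]

/-! ### Dyadic subdivision of an interval -/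

def dptR (a c : ℝ) (k : ℕ) (s : ℝ) : ℝ := a + (c - a) * s / 2 ^ k

def dpt (a c : ℝ) (k : ℕ) (j : ℤ) : ℝ := dptR a c k j

def sibIdx (j : ℤ) : ℤ := if j % 2 = 0 then j + 1 else j - 1

def idxF (a c : ℝ) (k : ℕ) (x : ℝ) : ℤ := ⌊(x - a) * 2 ^ k / (c - a)⌋

def eAvg (b : ℝ → ℝ) (a c : ℝ) (k : ℕ) (x : ℝ) : ℝ :=
  avgI b (dpt a c k (idxF a c k x)) (dpt a c k (idxF a c k x + 1))

def sAvg (b : ℝ → ℝ) (a c : ℝ) (k : ℕ) (x : ℝ) : ℝ :=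
  avgI b (dpt a c k (sibIdx (idxF a c k x))) (dpt a c k (sibIdx (idxF a c k x) + 1))

section dyadic

variable {a c : ℝ}

lemma dptR_le_iff (hac : a < c) {k : ℕ} {s x : ℝ} : dptR a c k s ≤ x ↔ s ≤ (x - a) * 2 ^ k / (c - a) := by
  have hL : (0:ℝ) < c - a := sub_pos.2 hac
  have hd : (0:ℝ) < (c - a) / 2 ^ k := by positivity
  rw [dptR, show (c - a) * s / 2 ^ k = s * ((c - a) / 2 ^ k) from by ring,
    ← le_sub_iff_add_le', ← le_div_iff₀ hd, div_div_eq_mul_div]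

lemma dptR_lt_iff (hac : a < c) {k : ℕ} {s x : ℝ} :
    x < dptR a c k s ↔ (x - a) * 2 ^ k / (c - a) < s := by
  rw [← not_le, dptR_le_iff hac, not_le]

lemma dpt_cast_succ {k : ℕ} (j : ℤ) : dpt a c k (j + 1) = dptR a c k ((j:ℝ) + 1) := by
  unfold dpt dptR
  push_cast
  ring

lemma dpt_lt (hac : a < c) {k : ℕ} {j j' : ℤ} (hj : j < j') : dpt a c k j < dpt a c k j' := by
  have hL : (0:ℝ) < c - a := sub_pos.2 hac
  have h2 : (0:ℝ) < 2 ^ k := by positivity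
  have h4 : (0:ℝ) < ((2:ℝ) ^ k)⁻¹ := by positivity
  have hcast : (j:ℝ) < (j':ℝ) := by exact_mod_cast hj
  unfold dpt dptR
  simp only [div_eq_mul_inv]
  nlinarith [mul_lt_mul_of_pos_right (mul_lt_mul_of_pos_left hcast hL) h4]

lemma dpt_zero {k : ℕ} : dpt a c k 0 = a := by simp [dpt, dptR]

lemma dpt_top (hac : a < c) {k : ℕ} : dpt a c k (2 ^ k) = c := by
  have h2 : ((2:ℝ)) ^ k ≠ 0 := by positivity
  simp only [dpt, dptR]
  push_cast
  field_simp
  ring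

lemma dpt_len {k : ℕ} (j : ℤ) : dpt a c k (j + 1) - dpt a c k j = (c - a) / 2 ^ k := by
  simp only [dpt, dptR]
  push_cast
  ring

lemma dpt_double {k : ℕ} (j : ℤ) : dpt a c (k + 1) (2 * j) = dpt a c k j := by
  have h2 : ((2:ℝ)) ^ k ≠ 0 := by positivity
  simp only [dpt, dptR, pow_succ]
  push_cast
  field_simp

lemma dpt_double_mid {k : ℕ} (j : ℤ) :
    dpt a c (k + 1) (2 * j + 1) = (dpt a c k j + dpt a c k (j + 1)) / 2 := by
  have h2 : ((2:ℝ)) ^ k ≠ 0 := by positivity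
  simp only [dpt, dptR, pow_succ]
  push_cast
  field_simp
  ring

lemma idxF_le (hac : a < c) {k : ℕ} (x : ℝ) : dpt a c k (idxF a c k x) ≤ x :=
  (dptR_le_iff hac).2 (Int.floor_le _)

lemma idxF_gt (hac : a < c) {k : ℕ} (x : ℝ) : x < dpt a c k (idxF a c k x + 1) := by
  rw [dpt_cast_succ]
  refine (dptR_lt_iff hac).2 ?_
  exact Int.lt_floor_add_one _

lemma idxF_eq (hac : a < c) {k : ℕ} {j : ℤ} {x : ℝ}
    (hx : x ∈ Set.Ioo (dpt a c k j) (dpt a c k (j + 1))) : idxF a c k x = j := by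
  have h1 : (j:ℝ) ≤ (x - a) * 2 ^ k / (c - a) := (dptR_le_iff hac).1 (le_of_lt hx.1)
  have h2 : (x - a) * 2 ^ k / (c - a) < (j:ℝ) + 1 := by
    have hx2 : x < dptR a c k ((j:ℝ) + 1) := by
      rw [← dpt_cast_succ]
      exact hx.2
    exact (dptR_lt_iff hac).1 hx2
  exact Int.floor_eq_iff.2 ⟨h1, h2⟩

lemma idxF_double {k : ℕ} (x : ℝ) :
    idxF a c (k + 1) x = 2 * idxF a c k x ∨ idxF a c (k + 1) x = 2 * idxF a c k x + 1 := by
  set t : ℝ := (x - a) * 2 ^ k / (c - a) with ht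
  have h2t : (x - a) * 2 ^ (k + 1) / (c - a) = 2 * t := by
    rw [ht, pow_succ]
    ring
  have h1 : 2 * ⌊t⌋ ≤ ⌊2 * t⌋ := Int.le_floor.2 (by push_cast; linarith [Int.floor_le t])
  have h2 : ⌊2 * t⌋ < 2 * ⌊t⌋ + 2 :=
    Int.floor_lt.2 (by push_cast; linarith [Int.lt_floor_add_one t])
  have : idxF a c (k + 1) x = ⌊2 * t⌋ := by rw [idxF, h2t]
  rw [this, idxF, ← ht]
  omega

lemma idxF_range (hac : a < c) {k : ℕ} {x : ℝ} (hx : x ∈ Set.Ioo a c) :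
    0 ≤ idxF a c k x ∧ idxF a c k x < 2 ^ k := by
  have hL : (0:ℝ) < c - a := sub_pos.2 hac
  have h2 : (0:ℝ) < 2 ^ k := by positivity
  have ht0 : (0:ℝ) < (x - a) * 2 ^ k / (c - a) := by
    have : (0:ℝ) < x - a := sub_pos.2 hx.1
    positivity
  have ht1 : (x - a) * 2 ^ k / (c - a) < 2 ^ k := by
    rw [div_lt_iff₀ hL]
    have : x - a < c - a := by linarith [hx.2]
    nlinarith
  constructor
  · exact Int.floor_nonneg.2 (le_of_lt ht0)
  · refine Int.floor_lt.2 ?_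
    push_cast
    exact ht1

lemma avgI_split {b : ℝ → ℝ} (hb : LocallyIntegrable b volume) {α β : ℝ} (hαβ : α < β) :
    avgI b α β = (avgI b α ((α + β) / 2) + avgI b ((α + β) / 2) β) / 2 := by
  set m : ℝ := (α + β) / 2 with hm
  have hαm : α < m := by rw [hm]; linarith
  have hmβ : m < β := by rw [hm]; linarith
  have hsplit : Set.Ioo α β = Set.Ioc α m ∪ Set.Ioo m β := by
    ext y
    simp only [Set.mem_Ioo, Set.mem_Ioc, Set.mem_union]
    constructor
    · rintro ⟨h1, h2⟩
      rcases le_or_gt y m with h | h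
      · exact Or.inl ⟨h1, h⟩
      · exact Or.inr ⟨h, h2⟩
    · rintro (⟨h1, h2⟩ | ⟨h1, h2⟩)
      · exact ⟨h1, lt_of_le_of_lt h2 hmβ⟩
      · exact ⟨lt_trans hαm h1, h2⟩
  have hdisj : Disjoint (Set.Ioc α m) (Set.Ioo m β) := by
    apply Set.disjoint_left.2
    rintro y ⟨_, h2⟩ ⟨h3, _⟩
    exact absurd h3 (not_lt.2 h2)
  have hi1 : IntegrableOn b (Set.Ioc α m) volume :=
    (hb.integrableOn_isCompact (isCompact_Icc (a := α) (b := m))).mono_set Set.Ioc_subset_Icc_self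
  have hi2 : IntegrableOn b (Set.Ioo m β) volume :=
    (hb.integrableOn_isCompact (isCompact_Icc (a := m) (b := β))).mono_set Set.Ioo_subset_Icc_self
  have hint : (∫ y in Set.Ioo α β, b y) = (∫ y in Set.Ioc α m, b y) + ∫ y in Set.Ioo m β, b y := by
    rw [hsplit]
    exact setIntegral_union hdisj measurableSet_Ioo hi1 hi2
  have hIoc : (∫ y in Set.Ioc α m, b y) = ∫ y in Set.Ioo α m, b y :=
    (integral_Ioc_eq_integral_Ioo)
  rw [avgI, avgI, avgI, hint, hIoc]
  have h1 : m - α = (β - α) / 2 := by rw [hm]; ring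
  have h2 : β - m = (β - α) / 2 := by rw [hm]; ring
  rw [h1, h2]
  have hβα : β - α ≠ 0 := ne_of_gt (by linarith)
  field_simp

lemma eAvg_rec (hac : a < c) {b : ℝ → ℝ} (hb : LocallyIntegrable b volume) {k : ℕ} (x : ℝ) :
    eAvg b a c k x = (eAvg b a c (k + 1) x + sAvg b a c (k + 1) x) / 2 := by
  set j : ℤ := idxF a c k x with hj
  have hsplit := avgI_split hb (dpt_lt hac (lt_add_one j) : dpt a c k j < dpt a c k (j + 1))
  rcases idxF_double (k := k) x with hcase | hcase
  · have hsib : sibIdx (2 * j) = 2 * j + 1 := by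
      unfold sibIdx
      rw [if_pos (Int.mul_emod_right 2 j)]
    rw [eAvg, sAvg, eAvg, hcase, hsib, ← hj]
    rw [show 2 * j + 1 + 1 = 2 * (j + 1) from by ring]
    rw [dpt_double, dpt_double, dpt_double_mid]
    rw [hsplit]
  · have hsib : sibIdx (2 * j + 1) = 2 * j := by
      unfold sibIdx
      rw [if_neg (by omega)]
      omega
    rw [eAvg, sAvg, eAvg, hcase, hsib, ← hj]
    rw [show 2 * j + 1 + 1 = 2 * (j + 1) from by ring]
    rw [dpt_double, dpt_double, dpt_double_mid]
    rw [hsplit]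
    ring

lemma eAvg_zero (hac : a < c) {b : ℝ → ℝ} {x : ℝ} (hx : x ∈ Set.Ioo a c) :
    eAvg b a c 0 x = avgI b a c := by
  have h1c : dpt a c 0 (0 + 1) = c := by
    have := dpt_top hac (k := 0)
    norm_num at this ⊢
    exact this
  have h0 : idxF a c 0 x = 0 := by
    refine idxF_eq hac ?_
    rw [dpt_zero, h1c]
    exact hx
  rw [eAvg, h0, dpt_zero, h1c]

lemma telescope (hac : a < c) {b : ℝ → ℝ} (hb : LocallyIntegrable b volume) {x : ℝ} (hx : x ∈ Set.Ioo a c)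
    (K : ℕ) :
    b x - avgI b a c = (∑ k ∈ Finset.Icc 1 K, ((2:ℝ) ^ k)⁻¹ * (b x - sAvg b a c k x))
      + ((2:ℝ) ^ K)⁻¹ * (b x - eAvg b a c K x) := by
  induction K with
  | zero => simp [eAvg_zero hac hx]
  | succ K ih =>
      rw [ih, Finset.sum_Icc_succ_top (by omega : 1 ≤ K + 1),
        eAvg_rec hac hb (k := K) x]
      rw [pow_succ]
      field_simp
      ring

lemma measurable_sAvg {b : ℝ → ℝ} {k : ℕ} : Measurable (sAvg b a c k) := by
  have hidx : Measurable (idxF a c k) := by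
    apply Int.measurable_floor.comp
    exact ((measurable_id.sub_const a).mul_const _).div_const _
  exact (measurable_from_top (f := fun j : ℤ =>
    avgI b (dpt a c k (sibIdx j)) (dpt a c k (sibIdx j + 1)))).comp hidx

end dyadic

section level

variable {a c : ℝ}

lemma dpt_le (hac : a < c) {k : ℕ} {j j' : ℤ} (hj : j ≤ j') : dpt a c k j ≤ dpt a c k j' := by
  rcases eq_or_lt_of_le hj with h | h
  · rw [h]
  · exact le_of_lt (dpt_lt hac h)

lemma sibIdx_invol (j : ℤ) : sibIdx (sibIdx j) = j := by
  unfold sibIdx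
  split_ifs <;> omega

lemma two_pow_emod (k : ℕ) (hk : 1 ≤ k) : (2:ℤ) ^ k % 2 = 0 := by
  obtain ⟨k', rfl⟩ : ∃ k', k = k' + 1 := ⟨k - 1, by omega⟩
  rw [pow_succ]
  omega

lemma sibIdx_mem {k : ℕ} (hk : 1 ≤ k) {j : ℤ} (hj : j ∈ Finset.Ico (0:ℤ) (2 ^ k)) :
    sibIdx j ∈ Finset.Ico (0:ℤ) (2 ^ k) := by
  simp only [Finset.mem_Ico] at hj ⊢
  have := two_pow_emod k hk
  unfold sibIdx
  split_ifs <;> omega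

/-- Level-k estimate: summing the sibling estimates over all pieces of level `k`. -/
lemma level_estimate {μ lam b : ℝ → ℝ} {N : ℝ}
    (hμ : LocallyIntegrable μ volume) (hμ0 : ∀ᵐ x : ℝ ∂volume, 0 < μ x)
    (hlam : LocallyIntegrable lam volume) (hlam0 : ∀ᵐ x : ℝ ∂volume, 0 < lam x)
    (hb : LocallyIntegrable b volume)
    (hcomm : ∀ f : ℝ → ℝ, NiceF f →
      (∫⁻ x : ℝ, ENNReal.ofReal ((commH b f x) ^ 2 * lam x)) ≤
        ENNReal.ofReal (N ^ 2) * ∫⁻ x : ℝ, ENNReal.ofReal ((f x) ^ 2 * μ x))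
    (hac : a < c) {k : ℕ} (hk : 1 ≤ k) :
    (∫⁻ x in Set.Ioo a c, ENNReal.ofReal ((b x - sAvg b a c k x) ^ 2 * lam x)) ≤
      ENNReal.ofReal (5 * N ^ 2) * ∫⁻ y in Set.Ioo a c, ENNReal.ofReal (μ y) := by
  set piece : ℤ → Set ℝ := fun j => Set.Ioo (dpt a c k j) (dpt a c k (j + 1)) with hpiece
  set S : Finset ℤ := Finset.Ico (0:ℤ) (2 ^ k) with hS
  have hlen : ∀ j : ℤ, dpt a c k (j + 1) - dpt a c k j = (c - a) / 2 ^ k := fun j => dpt_len j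
  have hlenpos : (0:ℝ) < (c - a) / 2 ^ k := by
    have : (0:ℝ) < c - a := sub_pos.2 hac
    positivity
  have hdisj : (↑S : Set ℤ).PairwiseDisjoint piece := by
    intro i hi j hj hij
    simp only [Function.onFun, hpiece]
    rw [Set.Ioo_disjoint_Ioo]
    rcases lt_or_gt_of_ne hij with h | h
    · exact le_trans (min_le_left _ _) (le_max_of_le_right (dpt_le hac (by omega)))
    · exact le_trans (min_le_right _ _) (le_max_of_le_left (dpt_le hac (by omega)))
  have hmeas : ∀ j ∈ S, MeasurableSet (piece j) := fun j _ => measurableSet_Ioo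
  have hU : ∀ (f : ℝ → ℝ≥0∞),
      (∫⁻ x in ⋃ j ∈ S, piece j, f x) = ∑ j ∈ S, ∫⁻ x in piece j, f x :=
    fun f => lintegral_biUnion_finset hdisj hmeas f
  have hsub : ∀ j ∈ S, piece j ⊆ Set.Ioo a c := by
    intro j hj x hx
    simp only [hS, Finset.mem_Ico] at hj
    constructor
    · calc a = dpt a c k 0 := (dpt_zero).symm
        _ ≤ dpt a c k j := dpt_le hac hj.1
        _ < x := hx.1
    · calc x < dpt a c k (j + 1) := hx.2
        _ ≤ dpt a c k (2 ^ k) := dpt_le hac (by omega)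
        _ = c := dpt_top hac
  -- decompose the lintegral over `Ioo a c` into pieces plus a null set
  have hdecomp : ∀ (f : ℝ → ℝ≥0∞),
      (∫⁻ x in Set.Ioo a c, f x) ≤ ∑ j ∈ S, ∫⁻ x in piece j, f x := by
    intro f
    have hcover : Set.Ioo a c ⊆ (⋃ j ∈ S, piece j) ∪ ((fun j => dpt a c k j) '' ↑S) := by
      intro x hx
      have hr := idxF_range hac (k := k) hx
      have hle := idxF_le hac (k := k) x
      have hgt := idxF_gt hac (k := k) x
      rcases eq_or_lt_of_le hle with h | h
      · right
        exact ⟨idxF a c k x, Finset.mem_coe.2 (by rw [hS, Finset.mem_Ico]; exact hr), h⟩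
      · left
        exact Set.mem_iUnion₂.2 ⟨idxF a c k x, by rw [hS, Finset.mem_Ico]; exact hr, ⟨h, hgt⟩⟩
    calc (∫⁻ x in Set.Ioo a c, f x)
        ≤ ∫⁻ x in (⋃ j ∈ S, piece j) ∪ ((fun j => dpt a c k j) '' ↑S), f x :=
          lintegral_mono' (Measure.restrict_mono hcover le_rfl) le_rfl
      _ ≤ (∫⁻ x in ⋃ j ∈ S, piece j, f x) + ∫⁻ x in ((fun j => dpt a c k j) '' ↑S), f x :=
          lintegral_union_le _ _ _
      _ = ∫⁻ x in ⋃ j ∈ S, piece j, f x := by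
          rw [setLIntegral_measure_zero _ _ ((S.finite_toSet.image _).measure_zero volume),
            add_zero]
      _ = ∑ j ∈ S, ∫⁻ x in piece j, f x := hU f
  -- on each piece, `sAvg` is the average over the sibling piece, and we apply `piece_estimate`
  have hpieceest : ∀ j ∈ S,
      (∫⁻ x in piece j, ENNReal.ofReal ((b x - sAvg b a c k x) ^ 2 * lam x)) ≤
        ENNReal.ofReal (5 * N ^ 2) * ∫⁻ y in piece (sibIdx j), ENNReal.ofReal (μ y) := by
    intro j hj
    have hcongr : (∫⁻ x in piece j, ENNReal.ofReal ((b x - sAvg b a c k x) ^ 2 * lam x))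
        = ∫⁻ x in piece j, ENNReal.ofReal
            ((b x - avgI b (dpt a c k (sibIdx j)) (dpt a c k (sibIdx j + 1))) ^ 2 * lam x) := by
      refine lintegral_congr_ae ?_
      filter_upwards [ae_restrict_mem measurableSet_Ioo] with x hx
      rw [sAvg, idxF_eq hac hx]
    rw [hcongr]
    have hq : dpt a c k (sibIdx j) < dpt a c k (sibIdx j + 1) := dpt_lt hac (lt_add_one _)
    have hsibcase : sibIdx j = j + 1 ∨ sibIdx j = j - 1 := by
      unfold sibIdx
      split_ifs <;> omega
    refine piece_estimate hμ hμ0 hlam hlam0 hb hcomm hq ?_ ?_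
    · intro x hx
      rcases hsibcase with h | h <;> rw [h] <;> intro hmem
      · exact absurd hmem.1 (not_le.2 hx.2)
      · rw [show j - 1 + 1 = j from by ring] at hmem
        exact absurd hmem.2 (not_le.2 hx.1)
    · intro x hx
      have l1 := hlen j
      have l2 := hlen (sibIdx j)
      have hx1 := hx.1
      have hx2 := hx.2
      rcases hsibcase with h | h
      · have e1 : dpt a c k (sibIdx j) = dpt a c k (j + 1) := by rw [h]
        have e2 : dpt a c k (sibIdx j + 1) = dpt a c k (sibIdx j) + (c - a) / 2 ^ k := by
          linarith [hlen (sibIdx j)]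
        apply sq_le_sq'
        · rw [e2, e1]; linarith [hlen j]
        · rw [e2, e1]; linarith [hlen j]
      · have e1 : dpt a c k (sibIdx j + 1) = dpt a c k j := by rw [h]; congr 1; ring
        have e2 : dpt a c k (sibIdx j) = dpt a c k j - (c - a) / 2 ^ k := by
          have := hlen (sibIdx j)
          rw [e1] at this
          linarith
        apply sq_le_sq'
        · rw [e2, e1]; linarith [hlen j]
        · rw [e2, e1]; linarith [hlen j]
  -- sum up
  calc (∫⁻ x in Set.Ioo a c, ENNReal.ofReal ((b x - sAvg b a c k x) ^ 2 * lam x))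
      ≤ ∑ j ∈ S, ∫⁻ x in piece j, ENNReal.ofReal ((b x - sAvg b a c k x) ^ 2 * lam x) :=
        hdecomp _
    _ ≤ ∑ j ∈ S, ENNReal.ofReal (5 * N ^ 2) * ∫⁻ y in piece (sibIdx j), ENNReal.ofReal (μ y) :=
        Finset.sum_le_sum hpieceest
    _ = ENNReal.ofReal (5 * N ^ 2) * ∑ j ∈ S, ∫⁻ y in piece (sibIdx j), ENNReal.ofReal (μ y) := by
        rw [Finset.mul_sum]
    _ = ENNReal.ofReal (5 * N ^ 2) * ∑ j ∈ S, ∫⁻ y in piece j, ENNReal.ofReal (μ y) := by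
        congr 1
        refine Finset.sum_nbij' (i := sibIdx) (j := sibIdx) ?_ ?_ ?_ ?_ ?_
        · exact fun j hj => sibIdx_mem hk hj
        · exact fun j hj => sibIdx_mem hk hj
        · exact fun j _ => sibIdx_invol j
        · exact fun j _ => sibIdx_invol j
        · exact fun j _ => rfl
    _ ≤ ENNReal.ofReal (5 * N ^ 2) * ∫⁻ y in Set.Ioo a c, ENNReal.ofReal (μ y) := by
        refine mul_le_mul_right ?_ _
        rw [← hU]
        exact lintegral_mono' (Measure.restrict_mono (Set.iUnion₂_subset hsub) le_rfl) le_rfl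

end level

section mainest

variable {a c : ℝ}

/-- Minkowski inequality for finite sums in `L²(ν)` (ENNReal-valued). -/
lemma lintegral_sq_sum_le {ν : Measure ℝ} {ι : Type*} (s : Finset ι) (G : ι → ℝ → ℝ≥0∞)
    (hG : ∀ i, AEMeasurable (G i) ν) :
    (∫⁻ x, (∑ i ∈ s, G i x) ^ (2:ℝ) ∂ν) ^ ((1:ℝ)/2) ≤
      ∑ i ∈ s, (∫⁻ x, (G i x) ^ (2:ℝ) ∂ν) ^ ((1:ℝ)/2) := by
  classical
  induction s using Finset.induction_on with
  | empty =>
      simp only [Finset.sum_empty]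
      rw [ENNReal.zero_rpow_of_pos (by norm_num : (0:ℝ) < 2)]
      simp
  | @insert i s hi ih =>
      have hGs : AEMeasurable (fun x => ∑ j ∈ s, G j x) ν :=
        Finset.aemeasurable_fun_sum s (fun j _ => hG j)
      have key := ENNReal.lintegral_Lp_add_le (hG i) hGs (by norm_num : (1:ℝ) ≤ 2)
      simp only [Pi.add_apply] at key
      calc (∫⁻ x, (∑ j ∈ insert i s, G j x) ^ (2:ℝ) ∂ν) ^ ((1:ℝ)/2)
          = (∫⁻ x, (G i x + ∑ j ∈ s, G j x) ^ (2:ℝ) ∂ν) ^ ((1:ℝ)/2) := by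
            congr 1
            refine lintegral_congr fun x => ?_
            rw [Finset.sum_insert hi]
        _ ≤ (∫⁻ x, (G i x) ^ (2:ℝ) ∂ν) ^ ((1:ℝ)/2)
              + (∫⁻ x, (∑ j ∈ s, G j x) ^ (2:ℝ) ∂ν) ^ ((1:ℝ)/2) := key
        _ ≤ (∫⁻ x, (G i x) ^ (2:ℝ) ∂ν) ^ ((1:ℝ)/2)
              + ∑ j ∈ s, (∫⁻ x, (G j x) ^ (2:ℝ) ∂ν) ^ ((1:ℝ)/2) := add_le_add le_rfl ih
        _ = ∑ j ∈ insert i s, (∫⁻ x, (G j x) ^ (2:ℝ) ∂ν) ^ ((1:ℝ)/2) := by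
            rw [Finset.sum_insert hi]

lemma geom_sum_le_one (K : ℕ) : (∑ k ∈ Finset.Icc 1 K, ((2:ℝ) ^ k)⁻¹) ≤ 1 := by
  have key : ∀ K : ℕ, (∑ k ∈ Finset.Icc 1 K, ((2:ℝ) ^ k)⁻¹) + ((2:ℝ) ^ K)⁻¹ ≤ 1 := by
    intro K
    induction K with
    | zero => norm_num
    | succ K ih =>
        rw [Finset.sum_Icc_succ_top (by omega : 1 ≤ K + 1)]
        have h1 : ((2:ℝ) ^ (K + 1))⁻¹ + ((2:ℝ) ^ (K + 1))⁻¹ = ((2:ℝ) ^ K)⁻¹ := by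
          rw [pow_succ]
          field_simp
          ring
        linarith
  have := key K
  have hpos : (0:ℝ) < ((2:ℝ) ^ K)⁻¹ := by positivity
  linarith

/-- Almost everywhere on `(a,c)`, the dyadic tail term tends to zero
(Lebesgue differentiation). -/
lemma tail_tendsto {b : ℝ → ℝ} (hb : LocallyIntegrable b volume) (hac : a < c) :
    ∀ᵐ x : ℝ ∂volume, x ∈ Set.Ioo a c →
      Tendsto (fun K : ℕ => ((2:ℝ) ^ K)⁻¹ * (b x - eAvg b a c K x)) atTop (𝓝 0) := by
  filter_upwards [IsUnifLocDoublingMeasure.ae_tendsto_average_norm_sub (μ := volume) hb 1]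
    with x hx hxI
  set δ : ℕ → ℝ := fun K => (c - a) / 2 ^ K with hδ
  have hδpos : ∀ K, 0 < δ K := fun K => by
    have : (0:ℝ) < c - a := sub_pos.2 hac
    positivity
  have hδ0 : Tendsto δ atTop (𝓝[>] (0:ℝ)) := by
    rw [tendsto_nhdsWithin_iff]
    constructor
    · have : δ = fun K : ℕ => (c - a) * (1/2) ^ K := by
        funext K
        show (c - a) / 2 ^ K = (c - a) * (1 / 2) ^ K
        rw [one_div, inv_pow, ← div_eq_mul_inv]
      rw [this]
      have := tendsto_pow_atTop_nhds_zero_of_lt_one (by norm_num : (0:ℝ) ≤ 1/2)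
        (by norm_num : (1:ℝ)/2 < 1)
      simpa using this.const_mul (c - a)
    · exact Eventually.of_forall fun K => hδpos K
  have havg : Tendsto (fun K : ℕ => ⨍ y in Metric.closedBall x (δ K), ‖b y - b x‖) atTop
      (𝓝 0) := by
    refine hx (fun _ => x) δ hδ0 ?_
    exact Eventually.of_forall fun K => by
      simp [Metric.mem_closedBall, le_of_lt (hδpos K)]
  -- pointwise bound |b x - eAvg K x| ≤ 2 ⨍
  have hbound : ∀ K : ℕ, |b x - eAvg b a c K x| ≤
      2 * ⨍ y in Metric.closedBall x (δ K), ‖b y - b x‖ := by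
    intro K
    set α : ℝ := dpt a c K (idxF a c K x) with hα
    set β : ℝ := dpt a c K (idxF a c K x + 1) with hβ
    have hαβlen : β - α = δ K := dpt_len _
    have hαx : α ≤ x := idxF_le hac x
    have hxβ : x < β := idxF_gt hac x
    have hαβ : α < β := lt_of_le_of_lt hαx hxβ
    have hAsub : Set.Ioo α β ⊆ Metric.closedBall x (δ K) := by
      intro y hy
      rw [Metric.mem_closedBall, Real.dist_eq, abs_le]
      constructor <;> [linarith [hy.1, hy.2, hαβlen]; linarith [hy.1, hy.2, hαβlen]]
    have hIntA : IntegrableOn (fun y => b y - b x) (Set.Ioo α β) volume :=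
      ((hb.integrableOn_isCompact (isCompact_Icc (a := α) (b := β))).mono_set
        Set.Ioo_subset_Icc_self).sub (integrableOn_const measure_Ioo_lt_top.ne)
    have hIntB : IntegrableOn (fun y => ‖b y - b x‖) (Metric.closedBall x (δ K)) volume := by
      refine Integrable.norm ?_
      exact (hb.integrableOn_isCompact (isCompact_closedBall x (δ K))).sub
        (integrableOn_const measure_closedBall_lt_top.ne)
    have hvolA : (volume (Set.Ioo α β)).toReal = δ K := by
      rw [Real.volume_Ioo, ENNReal.toReal_ofReal (by linarith), hαβlen]
    have havgdiff : eAvg b a c K x - b x = (δ K)⁻¹ * ∫ y in Set.Ioo α β, (b y - b x) := by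
      rw [eAvg, ← hα, ← hβ, avgI, hαβlen]
      rw [integral_sub ((hb.integrableOn_isCompact (isCompact_Icc (a := α) (b := β))).mono_set
        Set.Ioo_subset_Icc_self) (integrableOn_const measure_Ioo_lt_top.ne)]
      rw [setIntegral_const, measureReal_def, hvolA, smul_eq_mul]
      have hδne : δ K ≠ 0 := ne_of_gt (hδpos K)
      field_simp
    have h1 : |eAvg b a c K x - b x| ≤ (δ K)⁻¹ * ∫ y in Set.Ioo α β, |b y - b x| := by
      rw [havgdiff, abs_mul, abs_of_pos (inv_pos.2 (hδpos K))]
      refine mul_le_mul_of_nonneg_left ?_ (le_of_lt (inv_pos.2 (hδpos K)))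
      calc |∫ y in Set.Ioo α β, (b y - b x)| ≤ ∫ y in Set.Ioo α β, |b y - b x| := by
            simpa [Real.norm_eq_abs] using norm_integral_le_integral_norm
              (μ := volume.restrict (Set.Ioo α β)) (fun y => b y - b x)
        _ = _ := rfl
    have h2 : (∫ y in Set.Ioo α β, |b y - b x|) ≤
        ∫ y in Metric.closedBall x (δ K), ‖b y - b x‖ := by
      simp only [Real.norm_eq_abs]
      refine setIntegral_mono_set (by simpa [Real.norm_eq_abs] using hIntB) ?_ ?_
      · exact Eventually.of_forall fun y => abs_nonneg _
      · exact HasSubset.Subset.eventuallyLE hAsub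
    have h3 : (∫ y in Metric.closedBall x (δ K), ‖b y - b x‖)
        = 2 * δ K * ⨍ y in Metric.closedBall x (δ K), ‖b y - b x‖ := by
      rw [setAverage_eq, smul_eq_mul,
        Real.volume_real_closedBall (by linarith [hδpos K])]
      have hne : 2 * δ K ≠ 0 := by
        have := hδpos K
        intro hcon
        linarith
      field_simp
      rw [mul_div_assoc, div_self (ne_of_gt (hδpos K)), mul_one]
    have havg_nonneg : 0 ≤ ⨍ y in Metric.closedBall x (δ K), ‖b y - b x‖ := by
      rw [setAverage_eq, smul_eq_mul]
      positivity
    rw [abs_sub_comm]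
    calc |eAvg b a c K x - b x| ≤ (δ K)⁻¹ * ∫ y in Set.Ioo α β, |b y - b x| := h1
      _ ≤ (δ K)⁻¹ * (2 * δ K * ⨍ y in Metric.closedBall x (δ K), ‖b y - b x‖) := by
          rw [← h3]
          exact mul_le_mul_of_nonneg_left h2 (le_of_lt (inv_pos.2 (hδpos K)))
      _ = 2 * ⨍ y in Metric.closedBall x (δ K), ‖b y - b x‖ := by
          have hδne : δ K ≠ 0 := ne_of_gt (hδpos K)
          field_simp
  -- squeeze
  rw [tendsto_zero_iff_norm_tendsto_zero]
  refine squeeze_zero (fun K => norm_nonneg _) ?_ (by simpa using havg.const_mul 2)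
  intro K
  rw [Real.norm_eq_abs, abs_mul, abs_of_pos (by positivity : (0:ℝ) < ((2:ℝ)^K)⁻¹)]
  calc ((2:ℝ) ^ K)⁻¹ * |b x - eAvg b a c K x| ≤ 1 * |b x - eAvg b a c K x| := by
        refine mul_le_mul_of_nonneg_right ?_ (abs_nonneg _)
        rw [inv_le_one_iff₀]
        right
        exact one_le_pow₀ (by norm_num)
    _ = |b x - eAvg b a c K x| := one_mul _
    _ ≤ 2 * ⨍ y in Metric.closedBall x (δ K), ‖b y - b x‖ := hbound K

end mainest

section maininterval

variable {a c : ℝ}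

lemma ennreal_pow_two_eq_rpow (x : ℝ≥0∞) : x ^ (2:ℕ) = x ^ (2:ℝ) := by
  rw [← ENNReal.rpow_natCast x 2]
  norm_num

lemma ennreal_le_of_rpow_half_le {X S : ℝ≥0∞} (h : X ^ ((1:ℝ)/2) ≤ S) : X ≤ S ^ (2:ℕ) := by
  calc X = (X ^ ((1:ℝ)/2)) ^ (2:ℝ) := by
        rw [← ENNReal.rpow_mul]
        norm_num
    _ ≤ S ^ (2:ℝ) := ENNReal.rpow_le_rpow h (by norm_num)
    _ = S ^ (2:ℕ) := (ennreal_pow_two_eq_rpow S).symm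

lemma rpow_half_sq_eq (w : ℝ≥0∞) : (w ^ ((1:ℝ)/2)) ^ (2:ℝ) = w := by
  rw [← ENNReal.rpow_mul]
  norm_num

lemma aemeasurable_abs' {f : ℝ → ℝ} {ν : Measure ℝ} (hf : AEMeasurable f ν) :
    AEMeasurable (fun x => |f x|) ν := by
  have h : (fun x => |f x|) = fun x => max (f x) (-f x) := by
    funext x
    rw [abs_eq_max_neg]
  rw [h]
  exact hf.max hf.neg

/-- Main per-interval estimate:
`∫_I (b - ⟨b⟩_I)² λ ≤ 5 N² ∫_I μ` (with lintegrals). -/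
lemma main_estimate {μ lam b : ℝ → ℝ} {N : ℝ}
    (hμ : LocallyIntegrable μ volume) (hμ0 : ∀ᵐ x : ℝ ∂volume, 0 < μ x)
    (hlam : LocallyIntegrable lam volume) (hlam0 : ∀ᵐ x : ℝ ∂volume, 0 < lam x)
    (hb : LocallyIntegrable b volume)
    (hcomm : ∀ f : ℝ → ℝ, NiceF f →
      (∫⁻ x : ℝ, ENNReal.ofReal ((commH b f x) ^ 2 * lam x)) ≤
        ENNReal.ofReal (N ^ 2) * ∫⁻ x : ℝ, ENNReal.ofReal ((f x) ^ 2 * μ x))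
    (hac : a < c) :
    (∫⁻ x in Set.Ioo a c, ENNReal.ofReal ((b x - avgI b a c) ^ 2 * lam x)) ≤
      ENNReal.ofReal (5 * N ^ 2) * ∫⁻ y in Set.Ioo a c, ENNReal.ofReal (μ y) := by
  set W : ℝ≥0∞ := ∫⁻ y in Set.Ioo a c, ENNReal.ofReal (μ y) with hW
  set B₀ : ℝ≥0∞ := ENNReal.ofReal (5 * N ^ 2) * W with hB₀
  set g : ℕ → ℝ → ℝ := fun k x => ((2:ℝ) ^ k)⁻¹ * (b x - sAvg b a c k x) with hg
  set P : ℕ → ℝ → ℝ := fun K x => ∑ k ∈ Finset.Icc 1 K, g k x with hP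
  have hbm : AEMeasurable b volume := hb.aestronglyMeasurable.aemeasurable
  have hlamm : AEMeasurable lam volume := hlam.aestronglyMeasurable.aemeasurable
  have hgm : ∀ k, AEMeasurable (g k) volume := fun k =>
    ((hbm.sub (measurable_sAvg (b := b) (a := a) (c := c) (k := k)).aemeasurable).const_mul _)
  have hPm : ∀ K, AEMeasurable (P K) volume := fun K =>
    Finset.aemeasurable_fun_sum _ fun k _ => hgm k
  have hsqm : ∀ (f : ℝ → ℝ), AEMeasurable f volume →
      AEMeasurable (fun x => ENNReal.ofReal (f x ^ 2 * lam x)) volume := by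
    intro f hf
    apply ENNReal.measurable_ofReal.comp_aemeasurable
    have : AEMeasurable (fun x => f x * f x * lam x) volume := (hf.mul hf).mul hlamm
    exact this.congr (Eventually.of_forall fun x => by ring)
  -- convergence of the partial sums
  have hconv : ∀ᵐ x ∂(volume.restrict (Set.Ioo a c)),
      Tendsto (fun K => P K x) atTop (𝓝 (b x - avgI b a c)) := by
    filter_upwards [ae_restrict_mem measurableSet_Ioo,
      ae_restrict_of_ae (tail_tendsto hb hac)] with x hxI htail
    have hPeq : ∀ K, P K x = (b x - avgI b a c) - ((2:ℝ) ^ K)⁻¹ * (b x - eAvg b a c K x) := by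
      intro K
      have := telescope hac hb hxI K
      rw [hP]
      simp only
      linarith
    have h2 : Tendsto (fun K : ℕ => (b x - avgI b a c)
        - ((2:ℝ) ^ K)⁻¹ * (b x - eAvg b a c K x)) atTop (𝓝 ((b x - avgI b a c) - 0)) :=
      tendsto_const_nhds.sub (htail hxI)
    rw [sub_zero] at h2
    exact h2.congr fun K => (hPeq K).symm
  -- uniform bound on the partial sums
  have hPK : ∀ K, (∫⁻ x in Set.Ioo a c, ENNReal.ofReal ((P K x) ^ 2 * lam x)) ≤ B₀ := by
    intro K
    set u : ℕ → ℝ → ℝ≥0∞ := fun k x =>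
      ENNReal.ofReal |g k x| * (ENNReal.ofReal (lam x)) ^ ((1:ℝ)/2) with hu
    have hum : ∀ k, AEMeasurable (u k) (volume.restrict (Set.Ioo a c)) := by
      intro k
      refine AEMeasurable.mul ?_ ?_
      · exact (ENNReal.measurable_ofReal.comp_aemeasurable (aemeasurable_abs' (hgm k))).restrict
      · exact (ENNReal.continuous_rpow_const.measurable.comp_aemeasurable
          (ENNReal.measurable_ofReal.comp_aemeasurable hlamm)).restrict
    -- pointwise domination
    have ptwise : ∀ᵐ x ∂(volume.restrict (Set.Ioo a c)),
        ENNReal.ofReal ((P K x) ^ 2 * lam x) ≤ (∑ k ∈ Finset.Icc 1 K, u k x) ^ (2:ℝ) := by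
      filter_upwards [ae_restrict_of_ae (hlam0.mono fun x hx => le_of_lt hx)] with x hlx
      have habs : |P K x| ≤ ∑ k ∈ Finset.Icc 1 K, |g k x| := Finset.abs_sum_le_sum_abs _ _
      have e1 : ENNReal.ofReal ((P K x) ^ 2 * lam x)
          = (ENNReal.ofReal |P K x|) ^ (2:ℕ) * ENNReal.ofReal (lam x) := by
        rw [ENNReal.ofReal_mul (sq_nonneg _), ← sq_abs, ENNReal.ofReal_pow (abs_nonneg _)]
      have e2 : (ENNReal.ofReal |P K x|) ^ (2:ℕ)
          ≤ (∑ k ∈ Finset.Icc 1 K, ENNReal.ofReal |g k x|) ^ (2:ℕ) := by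
        apply pow_le_pow_left' ?_ 2
        calc ENNReal.ofReal |P K x| ≤ ENNReal.ofReal (∑ k ∈ Finset.Icc 1 K, |g k x|) :=
              ENNReal.ofReal_le_ofReal habs
          _ = ∑ k ∈ Finset.Icc 1 K, ENNReal.ofReal |g k x| :=
              ENNReal.ofReal_sum_of_nonneg fun k _ => abs_nonneg _
      have e3 : (∑ k ∈ Finset.Icc 1 K, u k x)
          = (∑ k ∈ Finset.Icc 1 K, ENNReal.ofReal |g k x|)
              * (ENNReal.ofReal (lam x)) ^ ((1:ℝ)/2) := by
        rw [hu, ← Finset.sum_mul]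
      calc ENNReal.ofReal ((P K x) ^ 2 * lam x)
          ≤ (∑ k ∈ Finset.Icc 1 K, ENNReal.ofReal |g k x|) ^ (2:ℕ) * ENNReal.ofReal (lam x) := by
            rw [e1]
            exact mul_le_mul_left e2 _
        _ = (∑ k ∈ Finset.Icc 1 K, u k x) ^ (2:ℝ) := by
            rw [e3, ENNReal.mul_rpow_of_nonneg _ _ (by norm_num : (0:ℝ) ≤ 2),
              rpow_half_sq_eq, ennreal_pow_two_eq_rpow]
    -- per-level bound on the `u k`
    have hlevel : ∀ k ∈ Finset.Icc 1 K,
        (∫⁻ x in Set.Ioo a c, (u k x) ^ (2:ℝ)) ^ ((1:ℝ)/2)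
          ≤ ENNReal.ofReal (((2:ℝ) ^ k)⁻¹) * B₀ ^ ((1:ℝ)/2) := by
      intro k hk
      simp only [Finset.mem_Icc] at hk
      have hueq : ∀ᵐ x ∂(volume.restrict (Set.Ioo a c)),
          (u k x) ^ (2:ℝ) = ENNReal.ofReal (((2:ℝ) ^ k)⁻¹) ^ (2:ℕ)
            * ENNReal.ofReal ((b x - sAvg b a c k x) ^ 2 * lam x) := by
        filter_upwards [ae_restrict_of_ae (hlam0.mono fun x hx => le_of_lt hx)] with x hlx
        have hr0 : (0:ℝ) ≤ ((2:ℝ) ^ k)⁻¹ := by positivity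
        have stepA : (u k x) ^ (2:ℝ)
            = ENNReal.ofReal (|g k x| ^ 2) * ENNReal.ofReal (lam x) := by
          rw [hu]
          simp only
          rw [ENNReal.mul_rpow_of_nonneg _ _ (by norm_num : (0:ℝ) ≤ 2), rpow_half_sq_eq,
            ← ennreal_pow_two_eq_rpow, ← ENNReal.ofReal_pow (abs_nonneg _)]
        have stepC : |g k x| ^ 2 = ((2:ℝ) ^ k)⁻¹ ^ 2 * (b x - sAvg b a c k x) ^ 2 := by
          rw [sq_abs, hg]
          simp only
          ring
        rw [stepA, stepC, ENNReal.ofReal_mul (by positivity), ENNReal.ofReal_pow hr0,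
          ENNReal.ofReal_mul (sq_nonneg _)]
        ring
      have hint : (∫⁻ x in Set.Ioo a c, (u k x) ^ (2:ℝ))
          = ENNReal.ofReal (((2:ℝ) ^ k)⁻¹) ^ (2:ℕ)
            * ∫⁻ x in Set.Ioo a c, ENNReal.ofReal ((b x - sAvg b a c k x) ^ 2 * lam x) := by
        rw [lintegral_congr_ae hueq, lintegral_const_mul' _ _ (by
          exact ENNReal.pow_ne_top ENNReal.ofReal_ne_top)]
      rw [hint]
      have hlev := level_estimate hμ hμ0 hlam hlam0 hb hcomm hac hk.1
      calc (ENNReal.ofReal (((2:ℝ) ^ k)⁻¹) ^ (2:ℕ)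
            * ∫⁻ x in Set.Ioo a c, ENNReal.ofReal ((b x - sAvg b a c k x) ^ 2 * lam x))
              ^ ((1:ℝ)/2)
          ≤ (ENNReal.ofReal (((2:ℝ) ^ k)⁻¹) ^ (2:ℕ) * B₀) ^ ((1:ℝ)/2) := by
            exact ENNReal.rpow_le_rpow (mul_le_mul_right hlev _) (by norm_num)
        _ = ENNReal.ofReal (((2:ℝ) ^ k)⁻¹) * B₀ ^ ((1:ℝ)/2) := by
            rw [ENNReal.mul_rpow_of_nonneg _ _ (by norm_num : (0:ℝ) ≤ 1/2),
              ennreal_pow_two_eq_rpow, ← ENNReal.rpow_mul]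
            norm_num
    -- Minkowski and geometric sum
    have hmink := lintegral_sq_sum_le (ν := volume.restrict (Set.Ioo a c))
      (Finset.Icc 1 K) (fun k x => u k x) hum
    have hsum : (∑ k ∈ Finset.Icc 1 K, (∫⁻ x in Set.Ioo a c, (u k x) ^ (2:ℝ)) ^ ((1:ℝ)/2))
        ≤ B₀ ^ ((1:ℝ)/2) := by
      calc (∑ k ∈ Finset.Icc 1 K, (∫⁻ x in Set.Ioo a c, (u k x) ^ (2:ℝ)) ^ ((1:ℝ)/2))
          ≤ ∑ k ∈ Finset.Icc 1 K, ENNReal.ofReal (((2:ℝ) ^ k)⁻¹) * B₀ ^ ((1:ℝ)/2) :=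
            Finset.sum_le_sum hlevel
        _ = (∑ k ∈ Finset.Icc 1 K, ENNReal.ofReal (((2:ℝ) ^ k)⁻¹)) * B₀ ^ ((1:ℝ)/2) := by
            rw [Finset.sum_mul]
        _ ≤ 1 * B₀ ^ ((1:ℝ)/2) := by
            refine mul_le_mul_left ?_ _
            rw [← ENNReal.ofReal_sum_of_nonneg fun k _ => by positivity]
            calc ENNReal.ofReal (∑ k ∈ Finset.Icc 1 K, ((2:ℝ) ^ k)⁻¹)
                ≤ ENNReal.ofReal 1 := ENNReal.ofReal_le_ofReal (geom_sum_le_one K)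
              _ = 1 := ENNReal.ofReal_one
        _ = B₀ ^ ((1:ℝ)/2) := one_mul _
    have hX : (∫⁻ x in Set.Ioo a c, (∑ k ∈ Finset.Icc 1 K, u k x) ^ (2:ℝ)) ≤ B₀ := by
      have := ennreal_le_of_rpow_half_le (le_trans hmink hsum)
      calc (∫⁻ x in Set.Ioo a c, (∑ k ∈ Finset.Icc 1 K, u k x) ^ (2:ℝ))
          ≤ (B₀ ^ ((1:ℝ)/2)) ^ (2:ℕ) := this
        _ = B₀ := by
            rw [ennreal_pow_two_eq_rpow, rpow_half_sq_eq]
    exact le_trans (lintegral_mono_ae ptwise) hX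
  -- Fatou
  have heq : ∀ᵐ x ∂(volume.restrict (Set.Ioo a c)),
      ENNReal.ofReal ((b x - avgI b a c) ^ 2 * lam x)
        = liminf (fun K => ENNReal.ofReal ((P K x) ^ 2 * lam x)) atTop := by
    filter_upwards [hconv] with x hx
    have h1 : Tendsto (fun K => (P K x) ^ 2 * lam x) atTop
        (𝓝 ((b x - avgI b a c) ^ 2 * lam x)) := (hx.pow 2).mul_const (lam x)
    have h2 : Tendsto (fun K => ENNReal.ofReal ((P K x) ^ 2 * lam x)) atTop
        (𝓝 (ENNReal.ofReal ((b x - avgI b a c) ^ 2 * lam x))) :=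
      (ENNReal.continuous_ofReal.tendsto _).comp h1
    exact h2.liminf_eq.symm
  calc (∫⁻ x in Set.Ioo a c, ENNReal.ofReal ((b x - avgI b a c) ^ 2 * lam x))
      = ∫⁻ x in Set.Ioo a c, liminf (fun K => ENNReal.ofReal ((P K x) ^ 2 * lam x)) atTop :=
        lintegral_congr_ae heq
    _ ≤ liminf (fun K => ∫⁻ x in Set.Ioo a c, ENNReal.ofReal ((P K x) ^ 2 * lam x)) atTop :=
        lintegral_liminf_le' fun K => (hsqm _ (hPm K)).restrict
    _ ≤ liminf (fun _ : ℕ => B₀) atTop := Filter.liminf_le_liminf (Eventually.of_forall hPK)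
    _ = B₀ := Filter.liminf_const B₀

end maininterval

section final

variable {a c : ℝ}

lemma integral_weight_pos {μ : ℝ → ℝ} (hμ : LocallyIntegrable μ volume)
    (hμ0 : ∀ᵐ x : ℝ ∂volume, 0 < μ x) (hac : a < c) :
    0 < ∫ x in Set.Ioo a c, μ x := by
  have hIint : IntegrableOn μ (Set.Ioo a c) volume :=
    (hμ.integrableOn_isCompact (isCompact_Icc (a := a) (b := c))).mono_set
      Set.Ioo_subset_Icc_self
  have hnn : 0 ≤ᵐ[volume.restrict (Set.Ioo a c)] μ :=
    ae_restrict_of_ae (hμ0.mono fun x hx => le_of_lt hx)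
  rw [setIntegral_pos_iff_support_of_nonneg_ae hnn hIint]
  have hnull : volume (Set.Ioo a c \ Function.support μ) = 0 := by
    refine measure_mono_null ?_ (ae_iff.1 hμ0)
    intro x hx
    simp only [Set.mem_setOf_eq, not_lt]
    have := hx.2
    simp only [Function.mem_support, not_not] at this
    rw [this]
  have hcover : Set.Ioo a c ⊆ (Function.support μ ∩ Set.Ioo a c) ∪
      (Set.Ioo a c \ Function.support μ) := by
    intro x hx
    by_cases hs : x ∈ Function.support μ
    · exact Or.inl ⟨hs, hx⟩
    · exact Or.inr ⟨hx, hs⟩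
  have : volume (Set.Ioo a c) ≤ volume (Function.support μ ∩ Set.Ioo a c) := by
    calc volume (Set.Ioo a c)
        ≤ volume ((Function.support μ ∩ Set.Ioo a c) ∪ (Set.Ioo a c \ Function.support μ)) :=
          measure_mono hcover
      _ ≤ volume (Function.support μ ∩ Set.Ioo a c) + volume (Set.Ioo a c \ Function.support μ) :=
          measure_union_le _ _
      _ = volume (Function.support μ ∩ Set.Ioo a c) := by rw [hnull, add_zero]
  refine lt_of_lt_of_le ?_ this
  rw [Real.volume_Ioo]
  exact ENNReal.ofReal_pos.2 (by linarith)

/-- The per-interval conclusion of part 1. -/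
lemma part1_interval {μ lam b : ℝ → ℝ} {N : ℝ}
    (hμ : LocallyIntegrable μ volume) (hμ0 : ∀ᵐ x : ℝ ∂volume, 0 < μ x)
    (hlam : LocallyIntegrable lam volume) (hlam0 : ∀ᵐ x : ℝ ∂volume, 0 < lam x)
    (hb : LocallyIntegrable b volume)
    (hcomm : ∀ f : ℝ → ℝ, NiceF f →
      (∫⁻ x : ℝ, ENNReal.ofReal ((commH b f x) ^ 2 * lam x)) ≤
        ENNReal.ofReal (N ^ 2) * ∫⁻ x : ℝ, ENNReal.ofReal ((f x) ^ 2 * μ x))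
    (hac : a < c) :
    (∫⁻ x in Set.Ioo a c, ENNReal.ofReal ((b x - avgI b a c) ^ 2 * lam x)) ≤
      ENNReal.ofReal (5 * N ^ 2) * ENNReal.ofReal (∫ x in Set.Ioo a c, μ x) := by
  have hIint : IntegrableOn μ (Set.Ioo a c) volume :=
    (hμ.integrableOn_isCompact (isCompact_Icc (a := a) (b := c))).mono_set
      Set.Ioo_subset_Icc_self
  have hnn : 0 ≤ᵐ[volume.restrict (Set.Ioo a c)] μ :=
    ae_restrict_of_ae (hμ0.mono fun x hx => le_of_lt hx)
  have hWeq : ENNReal.ofReal (∫ x in Set.Ioo a c, μ x)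
      = ∫⁻ y in Set.Ioo a c, ENNReal.ofReal (μ y) :=
    ofReal_integral_eq_lintegral_ofReal hIint hnn
  rw [hWeq]
  exact main_estimate hμ hμ0 hlam hlam0 hb hcomm hac

end final

/-- Necessary conditions from boundedness of the commutator: if
`[b,H] : L²(μ) → L²(λ)` is bounded with norm at most `N`, then
`sup_I μ(I)⁻¹ ∫_I |b − ⟨b⟩_I|² λ dx ≤ C N²` for an absolute constant `C`; and
if moreover `μ ∈ A₂`, then also
`sup_I (μ⁻¹(I)/|I|²) ∫_I |b − ⟨b⟩_I|² λ dx ≤ C [μ]_{A₂} N²`. -/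
theorem commutator_necessary_condition :
    ∃ C > (0 : ℝ), ∀ (μ lam b : ℝ → ℝ) (N : ℝ),
      IsWeight μ → IsWeight lam → LocallyIntegrable b volume →
      (∀ f : ℝ → ℝ, NiceF f →
        (∫⁻ x : ℝ, ENNReal.ofReal ((commH b f x) ^ 2 * lam x)) ≤
          ENNReal.ofReal (N ^ 2) * ∫⁻ x : ℝ, ENNReal.ofReal ((f x) ^ 2 * μ x)) →
      ((⨆ (a : ℝ) (c : ℝ) (_ : a < c),
          (ENNReal.ofReal (∫ x in Set.Ioo a c, μ x))⁻¹ *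
            ∫⁻ x in Set.Ioo a c,
              ENNReal.ofReal ((b x - avgI b a c) ^ 2 * lam x)) ≤
          ENNReal.ofReal (C * N ^ 2) ∧
        ∀ cmu : ℝ, IsA2 μ cmu →
          (⨆ (a : ℝ) (c : ℝ) (_ : a < c),
              ENNReal.ofReal ((∫ x in Set.Ioo a c, (μ x)⁻¹) / (c - a) ^ 2) *
                ∫⁻ x in Set.Ioo a c,
                  ENNReal.ofReal ((b x - avgI b a c) ^ 2 * lam x)) ≤
            ENNReal.ofReal (C * cmu * N ^ 2)) := by
  refine ⟨5, by norm_num, ?_⟩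
  intro μ lam b N hμw hlamw hb hcomm
  have hμ0 := hμw.2
  have hμ1 := hμw.1
  have hlam0 := hlamw.2
  have hlam1 := hlamw.1
  constructor
  · refine iSup_le fun a => iSup_le fun c => iSup_le fun hac => ?_
    have hmain := part1_interval hμ1 hμ0 hlam1 hlam0 hb hcomm hac
    have hApos := integral_weight_pos hμ1 hμ0 hac
    have hne0 : ENNReal.ofReal (∫ x in Set.Ioo a c, μ x) ≠ 0 := by
      rw [Ne, ENNReal.ofReal_eq_zero]
      linarith
    have hnetop : ENNReal.ofReal (∫ x in Set.Ioo a c, μ x) ≠ ⊤ := ENNReal.ofReal_ne_top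
    calc (ENNReal.ofReal (∫ x in Set.Ioo a c, μ x))⁻¹ *
          ∫⁻ x in Set.Ioo a c, ENNReal.ofReal ((b x - avgI b a c) ^ 2 * lam x)
        ≤ (ENNReal.ofReal (∫ x in Set.Ioo a c, μ x))⁻¹ *
            (ENNReal.ofReal (5 * N ^ 2) * ENNReal.ofReal (∫ x in Set.Ioo a c, μ x)) :=
          mul_le_mul_right hmain _
      _ = ENNReal.ofReal (5 * N ^ 2) := by
          rw [mul_comm (ENNReal.ofReal (5 * N ^ 2)), ← mul_assoc,
            ENNReal.inv_mul_cancel hne0 hnetop, one_mul]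
  · intro cmu hcmu
    refine iSup_le fun a => iSup_le fun c => iSup_le fun hac => ?_
    by_cases hInt : IntegrableOn (fun x => (μ x)⁻¹) (Set.Ioo a c) volume
    · have hmain := part1_interval hμ1 hμ0 hlam1 hlam0 hb hcomm hac
      have hApos := integral_weight_pos hμ1 hμ0 hac
      have hne0 : ENNReal.ofReal (∫ x in Set.Ioo a c, μ x) ≠ 0 := by
        rw [Ne, ENNReal.ofReal_eq_zero]
        linarith
      have hnetop : ENNReal.ofReal (∫ x in Set.Ioo a c, μ x) ≠ ⊤ := ENNReal.ofReal_ne_top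
      have hA'nn : 0 ≤ ∫ x in Set.Ioo a c, (μ x)⁻¹ := by
        refine integral_nonneg_of_ae ?_
        filter_upwards [ae_restrict_of_ae hμ0] with x hx
        positivity
      have h2 := hcmu a c hac
      rw [avgI, avgI] at h2
      have hcmu0 : 0 ≤ cmu := by
        refine le_trans ?_ h2
        have h3 : 0 < (c - a)⁻¹ * ∫ x in Set.Ioo a c, μ x := by
          have : (0:ℝ) < (c - a)⁻¹ := by
            rw [inv_pos]
            linarith
          exact mul_pos this hApos
        have h4 : 0 ≤ (c - a)⁻¹ * ∫ x in Set.Ioo a c, (μ x)⁻¹ := by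
          refine mul_nonneg (le_of_lt ?_) hA'nn
          rw [inv_pos]
          linarith
        exact mul_nonneg (le_of_lt h3) h4
      have hq : (∫ x in Set.Ioo a c, (μ x)⁻¹) / (c - a) ^ 2
          ≤ cmu / ∫ x in Set.Ioo a c, μ x := by
        have hL : (0:ℝ) < c - a := by linarith
        rw [div_le_div_iff₀ (by positivity) hApos]
        have hid : ((c - a)⁻¹ * ∫ x in Set.Ioo a c, μ x) *
            ((c - a)⁻¹ * ∫ x in Set.Ioo a c, (μ x)⁻¹) * (c - a) ^ 2
            = (∫ x in Set.Ioo a c, μ x) * ∫ x in Set.Ioo a c, (μ x)⁻¹ := by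
          have hLne : (c - a) ≠ 0 := ne_of_gt hL
          rw [show ((c - a)⁻¹ * ∫ x in Set.Ioo a c, μ x) *
              ((c - a)⁻¹ * ∫ x in Set.Ioo a c, (μ x)⁻¹) * (c - a) ^ 2
              = ((∫ x in Set.Ioo a c, μ x) * ∫ x in Set.Ioo a c, (μ x)⁻¹) *
                ((c - a)⁻¹ * (c - a)) ^ 2 from by ring, inv_mul_cancel₀ hLne, one_pow, mul_one]
        nlinarith [mul_le_mul_of_nonneg_right h2 (sq_nonneg (c - a))]
      calc ENNReal.ofReal ((∫ x in Set.Ioo a c, (μ x)⁻¹) / (c - a) ^ 2) *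
            ∫⁻ x in Set.Ioo a c, ENNReal.ofReal ((b x - avgI b a c) ^ 2 * lam x)
          ≤ (ENNReal.ofReal cmu * (ENNReal.ofReal (∫ x in Set.Ioo a c, μ x))⁻¹) *
              ∫⁻ x in Set.Ioo a c, ENNReal.ofReal ((b x - avgI b a c) ^ 2 * lam x) := by
            refine mul_le_mul_left ?_ _
            calc ENNReal.ofReal ((∫ x in Set.Ioo a c, (μ x)⁻¹) / (c - a) ^ 2)
                ≤ ENNReal.ofReal (cmu / ∫ x in Set.Ioo a c, μ x) :=
                  ENNReal.ofReal_le_ofReal hq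
              _ = ENNReal.ofReal cmu * (ENNReal.ofReal (∫ x in Set.Ioo a c, μ x))⁻¹ := by
                  rw [ENNReal.ofReal_div_of_pos hApos, div_eq_mul_inv]
        _ ≤ (ENNReal.ofReal cmu * (ENNReal.ofReal (∫ x in Set.Ioo a c, μ x))⁻¹) *
              (ENNReal.ofReal (5 * N ^ 2) * ENNReal.ofReal (∫ x in Set.Ioo a c, μ x)) :=
            mul_le_mul_right hmain _
        _ = ENNReal.ofReal cmu * ENNReal.ofReal (5 * N ^ 2) *
              ((ENNReal.ofReal (∫ x in Set.Ioo a c, μ x))⁻¹ *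
                ENNReal.ofReal (∫ x in Set.Ioo a c, μ x)) := by
            ring
        _ = ENNReal.ofReal cmu * ENNReal.ofReal (5 * N ^ 2) := by
            rw [ENNReal.inv_mul_cancel hne0 hnetop, mul_one]
        _ = ENNReal.ofReal (5 * cmu * N ^ 2) := by
            rw [← ENNReal.ofReal_mul hcmu0]
            congr 1
            ring
    · rw [MeasureTheory.integral_undef hInt]
      simp
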